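/- arXiv:1504.04616 — 5 statements merged into one kernel-verified Lean document; each statement's English description precedes it below -/
import Mathlib

section
/- Let G = (V_s, V_p, E) be a C4-free bipartite graph and let w : E → {1,…,k} be a decomposition of G satisfying the strict P4-rule. Then there exists an overlap labeling ℓ of G of length k such that for every edge e ∈ E, the minimum overlap ov_ℓ(e) equals w(e). In particular, r(G) ≤ k. -/
namespace Readability

/-- `x` overlaps `y` by `i`: `1 ≤ i ≤ min |x| |y|` and the length-`i` suffix of `x`
equals the length-`i` prefix of `y`. -/
def OverlapsBy {α : Type*} (x y : List α) (i : ℕ) : Prop :=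
  1 ≤ i ∧ i ≤ min x.length y.length ∧ x.drop (x.length - i) = y.take i

/-- `ov x y`: the minimum `i` such that `x` overlaps `y` by `i`, or `0` if none exists. -/
noncomputable def ov {α : Type*} (x y : List α) : ℕ := sInf {i | OverlapsBy x y i}

/-- An overlap labeling of length `r` of the bipartite graph with parts `Vs`, `Vp` and
edge relation `E ⊆ Vs × Vp`. -/
def IsOverlapLabeling {α Vs Vp : Type*} (E : Vs → Vp → Prop) (r : ℕ)
    (ls : Vs → List α) (lp : Vp → List α) : Prop :=
  (∀ u, (ls u).length = r) ∧ (∀ v, (lp v).length = r) ∧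
    ∀ u v, E u v ↔ ∃ i, OverlapsBy (ls u) (lp v) i

/-- Bipartite readability: the least `r` admitting an overlap labeling of length `r`
(over the alphabet `ℕ`). -/
noncomputable def bReadability {Vs Vp : Type*} (E : Vs → Vp → Prop) : ℕ :=
  sInf {r | ∃ (ls : Vs → List ℕ) (lp : Vp → List ℕ), IsOverlapLabeling E r ls lp}

/-- An injective overlap labeling of length `r` of the digraph with arc relation `A`. -/
def IsInjOverlapLabeling {V : Type*} (A : V → V → Prop) (r : ℕ) (ℓ : V → List ℕ) : Prop :=
  (∀ v, (ℓ v).length = r) ∧ Function.Injective ℓ ∧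
    ∀ u v, A u v ↔ 0 < ov (ℓ u) (ℓ v) ∧ ov (ℓ u) (ℓ v) < r

/-- Digraph readability: the least `r` admitting an injective overlap labeling of length `r`. -/
noncomputable def dReadability {V : Type*} (A : V → V → Prop) : ℕ :=
  sInf {r | ∃ ℓ : V → List ℕ, IsInjOverlapLabeling A r ℓ}

/-- A decomposition of size `k`: a weight function on edges with values in `{1,…,k}`. -/
def IsDecomposition {Vs Vp : Type*} (E : Vs → Vp → Prop) (k : ℕ) (w : Vs → Vp → ℕ) : Prop :=
  ∀ u v, E u v → 1 ≤ w u v ∧ w u v ≤ k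

/-- An induced `P₄` with consecutive edges `(s1,p1), (s2,p1), (s2,p2)`. -/
def InducedP4 {Vs Vp : Type*} (E : Vs → Vp → Prop) (s1 s2 : Vs) (p1 p2 : Vp) : Prop :=
  s1 ≠ s2 ∧ p1 ≠ p2 ∧ E s1 p1 ∧ E s2 p1 ∧ E s2 p2 ∧ ¬ E s1 p2

/-- The `P₄`-rule: on each induced `P₄`, if the middle edge has maximum weight then its weight
is at least the sum of the weights of the two outer edges. -/
def SatisfiesP4Rule {Vs Vp : Type*} (E : Vs → Vp → Prop) (w : Vs → Vp → ℕ) : Prop :=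
  ∀ s1 s2 p1 p2, InducedP4 E s1 s2 p1 p2 →
    w s2 p1 = max (w s1 p1) (max (w s2 p1) (w s2 p2)) →
    w s1 p1 + w s2 p2 ≤ w s2 p1

/-- The strict `P₄`-rule: as the `P₄`-rule, with strict inequality. -/
def SatisfiesStrictP4Rule {Vs Vp : Type*} (E : Vs → Vp → Prop) (w : Vs → Vp → ℕ) : Prop :=
  ∀ s1 s2 p1 p2, InducedP4 E s1 s2 p1 p2 →
    w s2 p1 = max (w s1 p1) (max (w s2 p1) (w s2 p2)) →
    w s1 p1 + w s2 p2 < w s2 p1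

/-- `C₄`-freeness of a bipartite graph. -/
def C4Free {Vs Vp : Type*} (E : Vs → Vp → Prop) : Prop :=
  ∀ (s1 s2 : Vs) (p1 p2 : Vp), s1 ≠ s2 → p1 ≠ p2 →
    ¬ (E s1 p1 ∧ E s1 p2 ∧ E s2 p1 ∧ E s2 p2)

/-- The subgraph `G_i` of a decomposition: edges of weight exactly `i`. -/
def SubAt {Vs Vp : Type*} (E : Vs → Vp → Prop) (w : Vs → Vp → ℕ) (i : ℕ) :
    Vs → Vp → Prop :=
  fun u v => E u v ∧ w u v = i

/-- A bipartite edge relation is a disjoint union of bicliques iff it has no induced `P₄`,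
i.e. whenever `(s1,p1), (s2,p1), (s2,p2)` are edges, so is `(s1,p2)`. -/
def BicliqueUnion {Vs Vp : Type*} (H : Vs → Vp → Prop) : Prop :=
  ∀ s1 s2 p1 p2, H s1 p1 → H s2 p1 → H s2 p2 → H s1 p2

/-- The HUB-rule for a decomposition `w`:
(i) every level graph `G_i` is a disjoint union of bicliques, and
(ii) non-isolated twins in `G_i` (for `i ≥ 2`) are twins in every `G_j` with `1 ≤ j ≤ i-1`
(stated for both parts of the bipartition). -/
def SatisfiesHUBRule {Vs Vp : Type*} (E : Vs → Vp → Prop) (w : Vs → Vp → ℕ) : Prop :=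
  (∀ i, 1 ≤ i → BicliqueUnion (SubAt E w i)) ∧
  (∀ i, 2 ≤ i → ∀ u v : Vs, u ≠ v → (∃ p, SubAt E w i u p) →
      (∀ p, SubAt E w i u p ↔ SubAt E w i v p) →
      ∀ j, 1 ≤ j → j ≤ i - 1 → ∀ p, SubAt E w j u p ↔ SubAt E w j v p) ∧
  (∀ i, 2 ≤ i → ∀ u v : Vp, u ≠ v → (∃ s, SubAt E w i s u) →
      (∀ s, SubAt E w i s u ↔ SubAt E w i s v) →
      ∀ j, 1 ≤ j → j ≤ i - 1 → ∀ s, SubAt E w j s u ↔ SubAt E w j s v)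

/-- The HUB number: minimum size of a decomposition satisfying the HUB-rule. -/
noncomputable def hubNumber {Vs Vp : Type*} (E : Vs → Vp → Prop) : ℕ :=
  sInf {k | ∃ w, IsDecomposition E k w ∧ SatisfiesHUBRule E w}

/-- The underlying undirected simple graph on `Vs ⊕ Vp` of a bipartite graph. -/
def underlyingGraph {Vs Vp : Type*} (E : Vs → Vp → Prop) : SimpleGraph (Vs ⊕ Vp) where
  Adj x y := (∃ u v, x = Sum.inl u ∧ y = Sum.inr v ∧ E u v) ∨
    (∃ u v, x = Sum.inr v ∧ y = Sum.inl u ∧ E u v)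
  symm := by
    constructor
    rintro x y (⟨u, v, rfl, rfl, h⟩ | ⟨u, v, rfl, rfl, h⟩)
    · exact Or.inr ⟨u, v, rfl, rfl, h⟩
    · exact Or.inl ⟨u, v, rfl, rfl, h⟩
  loopless := by
    constructor
    rintro x (⟨u, v, h1, h2, -⟩ | ⟨u, v, h1, h2, -⟩) <;> subst h1 <;> simp_all

/-- The radius of a graph: the least `r` such that some vertex has eccentricity at most `r`
(for a finite connected graph this is `min_u max_v dist(u,v)`). -/
noncomputable def graphRadius {V : Type*} (G : SimpleGraph V) : ℕ :=
  sInf {r | ∃ u, ∀ v, G.dist u v ≤ r}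

/-- Distinctness of two vertices `u, v` of the same part (here the `Vs`-part, with
neighborhoods taken in `Vp`): `max(|N(u)∖N(v)|, |N(v)∖N(u)|)`. -/
noncomputable def DTpair {Vs Vp : Type*} (E : Vs → Vp → Prop) (u v : Vs) : ℕ :=
  max {p : Vp | E u p ∧ ¬ E v p}.ncard {p : Vp | E v p ∧ ¬ E u p}.ncard

/-- Distinctness of a bipartite graph: the minimum of `DT(u,v)` over pairs of distinct
vertices in the same part. -/
noncomputable def distinctness {Vs Vp : Type*} (E : Vs → Vp → Prop) : ℕ :=
  sInf ({d | ∃ u v : Vs, u ≠ v ∧ d = DTpair E u v} ∪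
        {d | ∃ u v : Vp, u ≠ v ∧ d = DTpair (fun p s => E s p) u v})

/-- A bipartite graph fails to be a matching iff some vertex has degree at least 2. -/
def NotMatching {Vs Vp : Type*} (E : Vs → Vp → Prop) : Prop :=
  (∃ u : Vs, ∃ p1 p2 : Vp, p1 ≠ p2 ∧ E u p1 ∧ E u p2) ∨
  (∃ p : Vp, ∃ u1 u2 : Vs, u1 ≠ u2 ∧ E u1 p ∧ E u2 p)

private lemma exists_max_fun {β : Type*} [Fintype β] (P : β → Prop) (g : β → ℕ) (bound : ℕ)
    (hb : ∀ b, P b → g b ≤ bound) :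
    ∃ J : ℕ, J ≤ bound ∧ (∀ b, P b → g b ≤ J) ∧ (J ≠ 0 → ∃ b, P b ∧ g b = J) := by
  classical
  refine ⟨Finset.univ.sup (fun b => if P b then g b else 0), ?_, ?_, ?_⟩
  · refine Finset.sup_le fun b _ => ?_
    by_cases hc : P b
    · rw [if_pos hc]; exact hb b hc
    · rw [if_neg hc]; exact Nat.zero_le _
  · intro b hPb
    have := Finset.le_sup (f := fun b => if P b then g b else 0) (Finset.mem_univ b)
    simpa [if_pos hPb] using this
  · intro h
    by_cases hne : (Finset.univ : Finset β).Nonempty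
    · obtain ⟨b, -, hv⟩ := Finset.exists_mem_eq_sup Finset.univ hne
        (fun b => if P b then g b else 0)
      rw [hv]
      by_cases hc : P b
      · exact ⟨b, hc, by rw [if_pos hc]⟩
      · rw [hv, if_neg hc] at h; simp at h
    · rw [Finset.not_nonempty_iff_eq_empty] at hne
      rw [hne] at h; simp at h

private lemma sup_ite_eq_of_unique {β : Type*} [Fintype β] (P : β → Prop) [DecidablePred P]
    (g : β → ℕ) (b0 : β) (h0 : P b0) (hu : ∀ b, P b → b = b0) :
    (Finset.univ.sup fun b => if P b then g b else 0) = g b0 := by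
  apply le_antisymm
  · refine Finset.sup_le fun b _ => ?_
    by_cases hb : P b
    · rw [if_pos hb, hu b hb]
    · rw [if_neg hb]; exact Nat.zero_le _
  · have := Finset.le_sup (f := fun b => if P b then g b else 0) (Finset.mem_univ b0)
    simpa [if_pos h0] using this

private lemma sup_ite_lt {β : Type*} [Fintype β] (P : β → Prop) [DecidablePred P]
    (g : β → ℕ) (N : ℕ) (hN : 0 < N) (h : ∀ b, P b → g b < N) :
    (Finset.univ.sup fun b => if P b then g b else 0) < N := by
  have h2 : (Finset.univ.sup fun b => if P b then g b else 0) ≤ N - 1 := by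
    refine Finset.sup_le fun b _ => ?_
    by_cases hb : P b
    · rw [if_pos hb]; have := h b hb; omega
    · rw [if_neg hb]; omega
  omega

private theorem funMain {Vs Vp : Type*} [Fintype Vs] [Fintype Vp] :
    ∀ (K : ℕ) (E : Vs → Vp → Prop) (w : Vs → Vp → ℕ), C4Free E → IsDecomposition E K w →
      SatisfiesStrictP4Rule E w →
      ∃ (fs : Vs → ℕ → ℕ) (fp : Vp → ℕ → ℕ), ∀ u v m, 1 ≤ m → m ≤ K →
        ((∀ t, t < m → fs u (K - m + t) = fp v t) ↔ (E u v ∧ w u v = m)) := by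
  intro K
  induction K with
  | zero =>
    intro E w _ _ _
    exact ⟨fun _ _ => 0, fun _ _ => 0, fun u v m h1 h2 => absurd (h1.trans h2) (by omega)⟩
  | succ K ih =>
    intro E w hC hw hP
    classical
    -- the peeled graph
    have hC' : C4Free (fun u v => E u v ∧ w u v ≤ K) := by
      intro s1 s2 p1 p2 hs hp h
      exact hC s1 s2 p1 p2 hs hp ⟨h.1.1, h.2.1.1, h.2.2.1.1, h.2.2.2.1⟩
    have hw' : IsDecomposition (fun u v => E u v ∧ w u v ≤ K) K w :=
      fun u v h => ⟨(hw u v h.1).1, h.2⟩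
    have hP' : SatisfiesStrictP4Rule (fun u v => E u v ∧ w u v ≤ K) w := by
      rintro s1 s2 p1 p2 ⟨hs, hp, h1, h2, h3, h4⟩ hmax
      by_cases h5 : E s1 p2
      · exact absurd ⟨h1.1, h5, h2.1, h3.1⟩ (hC s1 s2 p1 p2 hs hp)
      · exact hP s1 s2 p1 p2 ⟨hs, hp, h1.1, h2.1, h3.1, h5⟩ hmax
    obtain ⟨fs', fp', hINV⟩ := ih (fun u v => E u v ∧ w u v ≤ K) w hC' hw' hP'
    -- structural lemmas from C4-freeness and the strict P4 rule
    have L2s : ∀ u u' v q, (E u v ∧ w u v = K + 1) → (E u' v ∧ w u' v = K + 1) → u ≠ u' →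
        E u q → q = v := by
      intro u u' v q huv hu'v huu' huq
      by_contra hqv
      by_cases hq : E u' q
      · exact hC u u' v q huu' (fun h => hqv h.symm) ⟨huv.1, huq, hu'v.1, hq⟩
      · have h4 : InducedP4 E u' u v q :=
          ⟨Ne.symm huu', fun h => hqv h.symm, hu'v.1, huv.1, huq, hq⟩
        have hb := (hw u q huq).2
        have := hP u' u v q h4 (by omega)
        omega
    have L2p : ∀ u v v' x, (E u v ∧ w u v = K + 1) → (E u v' ∧ w u v' = K + 1) → v ≠ v' →
        E x v → x = u := by
      intro u v v' x huv huv' hvv' hxv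
      by_contra hxu
      by_cases hx : E x v'
      · exact hC x u v v' hxu hvv' ⟨hxv, hx, huv.1, huv'.1⟩
      · have h4 : InducedP4 E x u v v' := ⟨hxu, hvv', hxv, huv.1, huv'.1, hx⟩
        have hb := (hw x v hxv).2
        have h1 := (hw x v hxv).1
        have := hP x u v v' h4 (by omega)
        omega
    have L3 : ∀ u v q x, (E u v ∧ w u v = K + 1) → E u q → q ≠ v → E x v → x ≠ u →
        w u q + w x v ≤ K := by
      intro u v q x huv huq hqv hxv hxu
      have h1 : w u q ≤ K := by
        by_contra h
        have hK : E u q ∧ w u q = K + 1 := ⟨huq, by have := (hw u q huq).2; omega⟩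
        exact hxu (L2p u v q x huv hK (fun h2 => hqv h2.symm) hxv)
      have h2 : w x v ≤ K := by
        by_contra h
        have hK : E x v ∧ w x v = K + 1 := ⟨hxv, by have := (hw x v hxv).2; omega⟩
        exact hqv (L2s u x v q huv hK (Ne.symm hxu) huq)
      by_cases hxq : E x q
      · exact absurd ⟨huv.1, huq, hxv, hxq⟩ (hC u x v q (Ne.symm hxu) (fun h => hqv h.symm))
      · have h4 : InducedP4 E x u v q := ⟨hxu, fun h => hqv h.symm, hxv, huv.1, huq, hxq⟩
        have := hP x u v q h4 (by omega)
        omega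
    -- the level-(K+1) relation and the subordinate predicates
    set EK : Vs → Vp → Prop := fun u v => E u v ∧ w u v = K + 1 with hEKd
    have hEKi : ∀ u v, EK u v ↔ (E u v ∧ w u v = K + 1) := fun _ _ => Iff.rfl
    set SSub : Vs → Prop := fun u => ∃ v, EK u v ∧ ∃ u', u' ≠ u ∧ EK u' v with hSSubd
    have hSSubi : ∀ u, SSub u ↔ ∃ v, EK u v ∧ ∃ u', u' ≠ u ∧ EK u' v := fun _ => Iff.rfl
    set PSub : Vp → Prop := fun v => ∃ u, EK u v ∧ ∀ u', EK u' v → u' = u with hPSubd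
    have hPSubi : ∀ v, PSub v ↔ ∃ u, EK u v ∧ ∀ u', EK u' v → u' = u := fun _ => Iff.rfl
    -- maximal lower weights
    choose Js hJs_le hJs_ge hJs_wit using fun u : Vs =>
      exists_max_fun (fun v => E u v ∧ w u v ≤ K) (fun v => w u v) K (fun v h => h.2)
    choose Jp hJp_le hJp_ge hJp_wit using fun v : Vp =>
      exists_max_fun (fun u => E u v ∧ w u v ≤ K) (fun u => w u v) K (fun u h => h.2)
    -- isolation of leaves with siblings
    have hIso : ∀ u0 v2 v3, EK u0 v2 → EK u0 v3 → v2 ≠ v3 → Jp v2 = 0 := by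
      intro u0 v2 v3 h2 h3 hne
      by_contra h
      obtain ⟨x, hx, -⟩ := hJp_wit v2 h
      have := L2p u0 v2 v3 x ((hEKi _ _).1 h2) ((hEKi _ _).1 h3) hne hx.1
      rw [this] at hx
      have := ((hEKi _ _).1 h2).2
      omega
    have hIso' : ∀ v0 u2 u3, EK u2 v0 → EK u3 v0 → u2 ≠ u3 → Js u2 = 0 := by
      intro v0 u2 u3 h2 h3 hne
      by_contra h
      obtain ⟨q, hq, -⟩ := hJs_wit u2 h
      have := L2s u2 u3 v0 q ((hEKi _ _).1 h2) ((hEKi _ _).1 h3) hne hq.1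
      rw [this] at hq
      have := ((hEKi _ _).1 h2).2
      omega
    have D1 : ∀ u, SSub u → ∀ q, E u q → w u q ≤ K → False := by
      intro u hS q hq hle
      obtain ⟨v0, h1, u', hu', h2⟩ := (hSSubi u).1 hS
      have := L2s u u' v0 q ((hEKi _ _).1 h1) ((hEKi _ _).1 h2) (Ne.symm hu') hq
      rw [this] at hle
      have := ((hEKi _ _).1 h1).2
      omega
    have hSSubU : ∀ u, SSub u → ∃ v0, EK u v0 ∧ ∀ v', EK u v' → v' = v0 := by
      intro u hS
      obtain ⟨v0, h1, u', hu', h2⟩ := (hSSubi u).1 hS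
      refine ⟨v0, h1, fun v' hv' => ?_⟩
      by_contra hne
      exact hu' (L2p u v0 v' u' ((hEKi _ _).1 h1) ((hEKi _ _).1 hv')
        (fun hh => hne hh.symm) ((hEKi _ _).1 h2).1)
    -- head lengths
    choose aS haS_le haS_ge haS_wit using fun u : Vs =>
      exists_max_fun (fun v => EK u v) (fun v => Jp v) K (fun v _ => hJp_le v)
    have D6 : ∀ u, aS u + Js u ≤ K := by
      intro u
      by_cases hA : aS u = 0
      · have := hJs_le u; omega
      by_cases hJ : Js u = 0
      · have := haS_le u; omega
      obtain ⟨v0, hv0, hv0e⟩ := haS_wit u hA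
      obtain ⟨q, hq, hqe⟩ := hJs_wit u hJ
      have hJp0 : Jp v0 ≠ 0 := by omega
      obtain ⟨x, hx, hxe⟩ := hJp_wit v0 hJp0
      have hqv : q ≠ v0 := by
        intro h; rw [h] at hq
        have := ((hEKi _ _).1 hv0).2; omega
      have hxu : x ≠ u := by
        intro h; rw [h] at hx
        have := ((hEKi _ _).1 hv0).2; omega
      have := L3 u v0 q x ((hEKi _ _).1 hv0) hq.1 hqv hx.1 hxu
      omega
    -- a bound on all letters used by the old labeling
    set N : ℕ := (Finset.univ.sup fun u => (Finset.range (K+1)).sup (fs' u)) +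
        (Finset.univ.sup fun v => (Finset.range (K+1)).sup (fp' v)) + 1 with hNd
    have hNs : ∀ u t, t ≤ K → fs' u t < N := by
      intro u t ht
      have h1 : fs' u t ≤ (Finset.range (K+1)).sup (fs' u) :=
        Finset.le_sup (Finset.mem_range.2 (by omega))
      have h2 : (Finset.range (K+1)).sup (fs' u) ≤
          Finset.univ.sup (fun u => (Finset.range (K+1)).sup (fs' u)) :=
        Finset.le_sup (f := fun u => (Finset.range (K+1)).sup (fs' u)) (Finset.mem_univ u)
      omega
    have hNp : ∀ v t, t ≤ K → fp' v t < N := by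
      intro v t ht
      have h1 : fp' v t ≤ (Finset.range (K+1)).sup (fp' v) :=
        Finset.le_sup (Finset.mem_range.2 (by omega))
      have h2 : (Finset.range (K+1)).sup (fp' v) ≤
          Finset.univ.sup (fun v => (Finset.range (K+1)).sup (fp' v)) :=
        Finset.le_sup (f := fun v => (Finset.range (K+1)).sup (fp' v)) (Finset.mem_univ v)
      omega
    have hN0 : 0 < N := by omega
    -- fresh letters
    set eqv : (Vs ⊕ Vp) ≃ Fin (Fintype.card (Vs ⊕ Vp)) := Fintype.equivFin (Vs ⊕ Vp) with heqvd
    set fresh : (Vs ⊕ Vp) → ℕ → ℕ :=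
      fun r i => N + (eqv r).1 + (Fintype.card (Vs ⊕ Vp)) * i with hfreshd
    have hfresh_ge : ∀ r i, N ≤ fresh r i := by
      intro r i; simp only [hfreshd]; omega
    have hfresh_inj : ∀ r i r' i', fresh r i = fresh r' i' → r = r' ∧ i = i' := by
      intro r i r' i' h
      simp only [hfreshd] at h
      have ha : (eqv r).1 < Fintype.card (Vs ⊕ Vp) := (eqv r).2
      have hb : (eqv r').1 < Fintype.card (Vs ⊕ Vp) := (eqv r').2
      have h1 : ((eqv r).1 + (Fintype.card (Vs ⊕ Vp)) * i) % (Fintype.card (Vs ⊕ Vp)) =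
          ((eqv r').1 + (Fintype.card (Vs ⊕ Vp)) * i') % (Fintype.card (Vs ⊕ Vp)) := by
        have : (eqv r).1 + (Fintype.card (Vs ⊕ Vp)) * i =
            (eqv r').1 + (Fintype.card (Vs ⊕ Vp)) * i' := by omega
        rw [this]
      rw [Nat.add_mul_mod_self_left, Nat.add_mul_mod_self_left,
        Nat.mod_eq_of_lt ha, Nat.mod_eq_of_lt hb] at h1
      have hc : 0 < Fintype.card (Vs ⊕ Vp) := by omega
      have h2 : i = i' := Nat.eq_of_mul_eq_mul_left hc (by omega)
      exact ⟨eqv.injective (Fin.val_injective h1), h2⟩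
    -- head letters for owners in Vs
    set hdS : Vs → ℕ → ℕ :=
      fun u i => Finset.univ.sup (fun v => if EK u v then fp' v i else 0) with hhdd
    have hhd_lt : ∀ u i, i ≤ K → hdS u i < N := by
      intro u i hi
      simp only [hhdd]
      exact sup_ite_lt _ _ _ hN0 (fun v _ => hNp v i hi)
    have hhd_eq : ∀ u v i, EK u v → (∀ v', EK u v' → v' = v) → hdS u i = fp' v i := by
      intro u v i h1 h2
      simp only [hhdd]
      exact sup_ite_eq_of_unique _ _ v h1 h2
    -- the templates
    set TS : Vs → ℕ → ℕ := fun u i =>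
      if i < aS u then hdS u i
      else if i < K + 1 - Js u then fresh (Sum.inl u) i
      else fs' u (i - 1) with hTSd
    set TP : Vp → ℕ → ℕ := fun v t =>
      if t < Jp v then fp' v t else fresh (Sum.inr v) t with hTPd
    have TS1 : ∀ u i, i < aS u → TS u i = hdS u i := by
      intro u i h; simp only [hTSd]; rw [if_pos h]
    have TS2 : ∀ u i, aS u ≤ i → i < K + 1 - Js u → TS u i = fresh (Sum.inl u) i := by
      intro u i h1 h2; simp only [hTSd]; rw [if_neg (not_lt.2 h1), if_pos h2]
    have TS3 : ∀ u i, K + 1 - Js u ≤ i → TS u i = fs' u (i - 1) := by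
      intro u i h1
      have hd6 := D6 u
      have hj := hJs_le u
      simp only [hTSd]
      rw [if_neg (not_lt.2 (by omega : aS u ≤ i)), if_neg (not_lt.2 h1)]
    have TP1 : ∀ v t, t < Jp v → TP v t = fp' v t := by
      intro v t h; simp only [hTPd]; rw [if_pos h]
    have TP2 : ∀ v t, Jp v ≤ t → TP v t = fresh (Sum.inr v) t := by
      intro v t h; simp only [hTPd]; rw [if_neg (not_lt.2 h)]
    -- the new labelings
    set fsN : Vs → ℕ → ℕ := fun u i =>
      if SSub u then Finset.univ.sup (fun v => if EK u v then TP v i else 0) else TS u i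
      with hfsNd
    set fpN : Vp → ℕ → ℕ := fun v t =>
      if PSub v then Finset.univ.sup (fun u => if EK u v then TS u t else 0) else TP v t
      with hfpNd
    have hfsN_nS : ∀ u i, ¬SSub u → fsN u i = TS u i := by
      intro u i h; simp only [hfsNd]; rw [if_neg h]
    have hfsN_S : ∀ u v0 i, SSub u → EK u v0 → (∀ v', EK u v' → v' = v0) →
        fsN u i = TP v0 i := by
      intro u v0 i hS h1 h2
      simp only [hfsNd]; rw [if_pos hS]
      exact sup_ite_eq_of_unique _ _ v0 h1 h2
    have hfpN_nP : ∀ v t, ¬PSub v → fpN v t = TP v t := by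
      intro v t h; simp only [hfpNd]; rw [if_neg h]
    have hfpN_P : ∀ v u0 t, PSub v → EK u0 v → (∀ u', EK u' v → u' = u0) →
        fpN v t = TS u0 t := by
      intro v u0 t hS h1 h2
      simp only [hfpNd]; rw [if_pos hS]
      exact sup_ite_eq_of_unique _ _ u0 h1 h2
    -- classification of large letters
    have A6 : ∀ u i, i ≤ K → N ≤ fsN u i → ∃ r, fsN u i = fresh r i := by
      intro u i hi hge
      by_cases hS : SSub u
      · obtain ⟨v0, h1, h2⟩ := hSSubU u hS
        rw [hfsN_S u v0 i hS h1 h2] at hge ⊢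
        by_cases hr : i < Jp v0
        · rw [TP1 v0 i hr] at hge; have := hNp v0 i hi; omega
        · exact ⟨Sum.inr v0, TP2 v0 i (not_lt.1 hr)⟩
      · rw [hfsN_nS u i hS] at hge ⊢
        by_cases h1 : i < aS u
        · rw [TS1 u i h1] at hge; have := hhd_lt u i hi; omega
        by_cases h2 : i < K + 1 - Js u
        · exact ⟨Sum.inl u, TS2 u i (not_lt.1 h1) h2⟩
        · rw [TS3 u i (not_lt.1 h2)] at hge
          have := hNs u (i - 1) (by omega); omega
    have B4 : ∀ v t, t ≤ K → N ≤ fpN v t → ∃ r, fpN v t = fresh r t := by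
      intro v t ht hge
      by_cases hS : PSub v
      · obtain ⟨u0, h1, h2⟩ := (hPSubi v).1 hS
        rw [hfpN_P v u0 t hS h1 h2] at hge ⊢
        by_cases hr1 : t < aS u0
        · rw [TS1 u0 t hr1] at hge; have := hhd_lt u0 t ht; omega
        by_cases hr2 : t < K + 1 - Js u0
        · exact ⟨Sum.inl u0, TS2 u0 t (not_lt.1 hr1) hr2⟩
        · rw [TS3 u0 t (not_lt.1 hr2)] at hge
          have := hNs u0 (t - 1) (by omega); omega
      · rw [hfpN_nP v t hS] at hge ⊢
        by_cases hr : t < Jp v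
        · rw [TP1 v t hr] at hge; have := hNp v t ht; omega
        · exact ⟨Sum.inr v, TP2 v t (not_lt.1 hr)⟩
    refine ⟨fsN, fpN, ?_⟩
    intro u v m hm1 hm2
    by_cases hmK : m = K + 1
    · -- top level
      constructor
      · intro halign
        by_cases hS : SSub u
        · obtain ⟨v0, hv0, hv0u⟩ := hSSubU u hS
          have h := halign K (by omega)
          rw [show K + 1 - m + K = K by omega] at h
          rw [hfsN_S u v0 K hS hv0 hv0u, TP2 v0 K (hJp_le v0)] at h
          by_cases hPv : PSub v
          · obtain ⟨u0, hu0, hu0u⟩ := (hPSubi v).1 hPv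
            rw [hfpN_P v u0 K hPv hu0 hu0u] at h
            exfalso
            by_cases hr1 : K < aS u0
            · rw [TS1 u0 K hr1] at h
              have h5 := hhd_lt u0 K le_rfl
              have h6 := hfresh_ge (Sum.inr v0) K
              omega
            by_cases hr2 : K < K + 1 - Js u0
            · rw [TS2 u0 K (not_lt.1 hr1) hr2] at h
              exact absurd (hfresh_inj _ _ _ _ h).1 (by simp)
            · rw [TS3 u0 K (not_lt.1 hr2)] at h
              have h5 := hNs u0 (K - 1) (by omega)
              have h6 := hfresh_ge (Sum.inr v0) K
              omega
          · rw [hfpN_nP v K hPv, TP2 v K (hJp_le v)] at h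
            have hvv : v0 = v := by simpa using (hfresh_inj _ _ _ _ h).1
            rw [hvv] at hv0
            exact ⟨((hEKi _ _).1 hv0).1, by rw [((hEKi _ _).1 hv0).2, hmK]⟩
        · have hd6 := D6 u
          have hale := haS_le u
          have h := halign (aS u) (by omega)
          rw [show K + 1 - m + aS u = aS u by omega] at h
          rw [hfsN_nS u (aS u) hS, TS2 u (aS u) le_rfl (by omega)] at h
          by_cases hPv : PSub v
          · obtain ⟨u0, hu0, hu0u⟩ := (hPSubi v).1 hPv
            rw [hfpN_P v u0 (aS u) hPv hu0 hu0u] at h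
            by_cases hr1 : aS u < aS u0
            · exfalso
              rw [TS1 u0 (aS u) hr1] at h
              have h5 := hhd_lt u0 (aS u) hale
              have h6 := hfresh_ge (Sum.inl u) (aS u)
              omega
            by_cases hr2 : aS u < K + 1 - Js u0
            · rw [TS2 u0 (aS u) (not_lt.1 hr1) hr2] at h
              have huu : u = u0 := by simpa using (hfresh_inj _ _ _ _ h).1
              rw [← huu] at hu0
              exact ⟨((hEKi _ _).1 hu0).1, by rw [((hEKi _ _).1 hu0).2, hmK]⟩
            · exfalso
              rw [TS3 u0 (aS u) (not_lt.1 hr2)] at h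
              have h5 := hNs u0 (aS u - 1) (by omega)
              have h6 := hfresh_ge (Sum.inl u) (aS u)
              omega
          · exfalso
            rw [hfpN_nP v (aS u) hPv] at h
            by_cases hr : aS u < Jp v
            · rw [TP1 v (aS u) hr] at h
              have h5 := hNp v (aS u) hale
              have h6 := hfresh_ge (Sum.inl u) (aS u)
              omega
            · rw [TP2 v (aS u) (not_lt.1 hr)] at h
              exact absurd (hfresh_inj _ _ _ _ h).1 (by simp)
      · intro hE
        have hEKuv : EK u v := (hEKi u v).2 ⟨hE.1, by omega⟩
        intro t ht
        rw [show K + 1 - m + t = t by omega]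
        by_cases hPv : PSub v
        · obtain ⟨u0, hu0, hu0u⟩ := (hPSubi v).1 hPv
          have huu : u = u0 := hu0u u hEKuv
          have hnS : ¬ SSub u := by
            intro hS
            obtain ⟨v1, hv1, u', hu', hu'v1⟩ := (hSSubi u).1 hS
            by_cases hvv : v1 = v
            · rw [hvv] at hu'v1
              exact hu' ((hu0u u' hu'v1).trans huu.symm)
            · exact hu' (L2p u v1 v u' ((hEKi _ _).1 hv1) ((hEKi _ _).1 hEKuv) hvv
                ((hEKi _ _).1 hu'v1).1)
          rw [hfsN_nS u t hnS, hfpN_P v u0 t hPv hu0 hu0u, ← huu]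
        · have hSu : SSub u := by
            rw [hPSubi] at hPv
            push_neg at hPv
            obtain ⟨u', h1, h2⟩ := hPv u hEKuv
            exact (hSSubi u).2 ⟨v, hEKuv, u', h2, h1⟩
          obtain ⟨v0, hv0, hv0u⟩ := hSSubU u hSu
          have hvv : v = v0 := hv0u v hEKuv
          rw [hfsN_S u v0 t hSu hv0 hv0u, hfpN_nP v t hPv, ← hvv]
    · -- lower levels
      have hmK' : m ≤ K := by omega
      constructor
      · intro halign
        have hSu : ¬ SSub u := by
          intro hS
          obtain ⟨v0, hv0, hv0u⟩ := hSSubU u hS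
          have h := halign (m - 1) (by omega)
          rw [show K + 1 - m + (m - 1) = K by omega] at h
          rw [hfsN_S u v0 K hS hv0 hv0u, TP2 v0 K (hJp_le v0)] at h
          obtain ⟨r, hr⟩ := B4 v (m - 1) (by omega) (by rw [← h]; exact hfresh_ge _ _)
          rw [hr] at h
          have := (hfresh_inj _ _ _ _ h).2
          omega
        have hmJs : m ≤ Js u := by
          by_contra hlt
          push_neg at hlt
          have hd6 := D6 u
          have hjle := hJs_le u
          have h := halign (m - 1 - Js u) (by omega)
          rw [show K + 1 - m + (m - 1 - Js u) = K - Js u by omega] at h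
          rw [hfsN_nS u (K - Js u) hSu, TS2 u (K - Js u) (by omega) (by omega)] at h
          obtain ⟨r, hr⟩ := B4 v (m - 1 - Js u) (by omega) (by rw [← h]; exact hfresh_ge _ _)
          rw [hr] at h
          have := (hfresh_inj _ _ _ _ h).2
          omega
        have hstepB : m ≤ Jp v ∧ ∀ t, t < m → fpN v t = fp' v t := by
          by_cases hPv : PSub v
          · obtain ⟨u0, hu0, hu0u⟩ := (hPSubi v).1 hPv
            by_cases h2 : ∃ v2, v2 ≠ v ∧ EK u0 v2
            · exfalso
              obtain ⟨v2, hv2ne, hv2⟩ := h2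
              have haS0 : aS u0 = 0 := by
                by_contra hA
                obtain ⟨v3, hv3, hv3e⟩ := haS_wit u0 hA
                by_cases hv3v : v3 = v
                · rw [hv3v] at hv3 hv3e
                  rw [hIso u0 v v2 hv3 hv2 (fun hh => hv2ne hh.symm)] at hv3e
                  exact hA hv3e.symm
                · rw [hIso u0 v3 v hv3 hu0 hv3v] at hv3e
                  exact hA hv3e.symm
              have h := halign 0 (by omega)
              rw [hfpN_P v u0 0 hPv hu0 hu0u,
                TS2 u0 0 (by omega) (by have := hJs_le u0; omega)] at h
              obtain ⟨r, hr⟩ := A6 u (K + 1 - m + 0) (by omega) (by rw [h]; exact hfresh_ge _ _)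
              rw [hr] at h
              have := (hfresh_inj _ _ _ _ h).2
              omega
            · push_neg at h2
              have hu0unique : ∀ v', EK u0 v' → v' = v := by
                intro v' hv'
                by_contra hne
                exact (h2 v' hne) hv'
              have haSu0 : Jp v ≤ aS u0 := haS_ge u0 v hu0
              have hd6 := D6 u0
              have hmv : m ≤ Jp v := by
                by_contra hlt
                push_neg at hlt
                have h := halign (Jp v) (by omega)
                rw [hfpN_P v u0 (Jp v) hPv hu0 hu0u] at h
                have haSeq : aS u0 = Jp v := by
                  refine le_antisymm ?_ haSu0
                  by_cases hA : aS u0 = 0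
                  · omega
                  obtain ⟨v3, hv3, hv3e⟩ := haS_wit u0 hA
                  rw [hu0unique v3 hv3] at hv3e
                  omega
                rw [TS2 u0 (Jp v) (by omega) (by omega)] at h
                obtain ⟨r, hr⟩ := A6 u (K + 1 - m + Jp v) (by omega)
                  (by rw [h]; exact hfresh_ge _ _)
                rw [hr] at h
                have := (hfresh_inj _ _ _ _ h).2
                omega
              refine ⟨hmv, fun t ht => ?_⟩
              rw [hfpN_P v u0 t hPv hu0 hu0u, TS1 u0 t (by omega),
                hhd_eq u0 v t hu0 hu0unique]
          · have hmv : m ≤ Jp v := by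
              by_contra hlt
              push_neg at hlt
              have h := halign (Jp v) (by omega)
              rw [hfpN_nP v (Jp v) hPv, TP2 v (Jp v) le_rfl] at h
              obtain ⟨r, hr⟩ := A6 u (K + 1 - m + Jp v) (by omega)
                (by rw [h]; exact hfresh_ge _ _)
              rw [hr] at h
              have := (hfresh_inj _ _ _ _ h).2
              omega
            exact ⟨hmv, fun t ht => by
              rw [hfpN_nP v t hPv, TP1 v t (by omega)]⟩
        have hold : ∀ t, t < m → fs' u (K - m + t) = fp' v t := by
          intro t ht
          have h := halign t ht
          rw [hfsN_nS u (K + 1 - m + t) hSu,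
            TS3 u (K + 1 - m + t) (by omega),
            show K + 1 - m + t - 1 = K - m + t by omega,
            hstepB.2 t ht] at h
          exact h
        have hcon := (hINV u v m hm1 hmK').1 hold
        exact ⟨hcon.1.1, hcon.2⟩
      · intro hE
        have hE' : (E u v ∧ w u v ≤ K) ∧ w u v = m := ⟨⟨hE.1, by omega⟩, hE.2⟩
        have hold := (hINV u v m hm1 hmK').2 hE'
        have hSu : ¬ SSub u := fun hS => D1 u hS v hE.1 (by omega)
        have hmJs : m ≤ Js u := by
          have := hJs_ge u v ⟨hE.1, by omega⟩
          omega
        have hmJp : m ≤ Jp v := by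
          have := hJp_ge v u ⟨hE.1, by omega⟩
          omega
        intro t ht
        rw [hfsN_nS u (K + 1 - m + t) hSu, TS3 u (K + 1 - m + t) (by omega),
          show K + 1 - m + t - 1 = K - m + t by omega]
        by_cases hPv : PSub v
        · obtain ⟨u0, hu0, hu0u⟩ := (hPSubi v).1 hPv
          have hu0unique : ∀ v', EK u0 v' → v' = v := by
            intro v2 hv2
            by_contra hne
            have h9 := L2p u0 v v2 u ((hEKi _ _).1 hu0) ((hEKi _ _).1 hv2)
              (fun hh => hne hh.symm) hE.1
            rw [← h9] at hu0
            have := ((hEKi _ _).1 hu0).2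
            omega
          have haSu0 : Jp v ≤ aS u0 := haS_ge u0 v hu0
          rw [hfpN_P v u0 t hPv hu0 hu0u, TS1 u0 t (by omega),
            hhd_eq u0 v t hu0 hu0unique]
          exact hold t ht
        · rw [hfpN_nP v t hPv, TP1 v t (by omega)]
          exact hold t ht


private lemma align_ofFn_iff (f g : ℕ → ℕ) (K m : ℕ) (hm : m ≤ K) :
    (List.ofFn (fun i : Fin K => f i)).drop (K - m) =
      (List.ofFn (fun i : Fin K => g i)).take m ↔ ∀ t, t < m → f (K - m + t) = g t := by
  rw [List.ext_get_iff]
  simp only [List.length_drop, List.length_take, List.length_ofFn]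
  constructor
  · rintro ⟨hl, h⟩ t ht
    have := h t (by omega) (by omega)
    simpa using this
  · intro h
    refine ⟨by omega, ?_⟩
    intro i h1 h2
    simp only [List.get_eq_getElem, List.getElem_drop, List.getElem_take, List.getElem_ofFn]
    exact h i (by omega)

/-- If `G` is a `C₄`-free bipartite graph and `w : E → {1,…,k}` is a decomposition
satisfying the strict P4-rule, then there is an overlap labeling `ℓ` of `G` of length `k`
with `ov_ℓ(e) = w(e)` on every edge; in particular `r(G) ≤ k`. -/
theorem statement6 {Vs Vp : Type*} [Fintype Vs] [Fintype Vp] (E : Vs → Vp → Prop)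
    (hC : C4Free E) (k : ℕ) (w : Vs → Vp → ℕ)
    (hw : IsDecomposition E k w) (hP : SatisfiesStrictP4Rule E w) :
    (∃ (ls : Vs → List ℕ) (lp : Vp → List ℕ), IsOverlapLabeling E k ls lp ∧
        ∀ u v, E u v → ov (ls u) (lp v) = w u v) ∧
      bReadability E ≤ k := by
  classical
  obtain ⟨fs, fp, hINV⟩ := funMain k E w hC hw hP
  set ls : Vs → List ℕ := fun u => List.ofFn (fun i : Fin k => fs u i) with hlsd
  set lp : Vp → List ℕ := fun v => List.ofFn (fun i : Fin k => fp v i) with hlpd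
  have hlen_s : ∀ u, (ls u).length = k := fun u => List.length_ofFn
  have hlen_p : ∀ v, (lp v).length = k := fun v => List.length_ofFn
  have hov : ∀ u v i, OverlapsBy (ls u) (lp v) i ↔ (E u v ∧ w u v = i) := by
    intro u v i
    constructor
    · rintro ⟨h1, h2, h3⟩
      rw [hlen_s u, hlen_p v] at h2
      rw [hlen_s u] at h3
      have hi : i ≤ k := by omega
      exact (hINV u v i h1 hi).1 ((align_ofFn_iff (fs u) (fp v) k i hi).1 h3)
    · rintro ⟨h1, h2⟩
      have hb := hw u v h1
      refine ⟨by omega, ?_, ?_⟩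
      · rw [hlen_s u, hlen_p v]; omega
      · rw [hlen_s u]
        exact (align_ofFn_iff (fs u) (fp v) k i (by omega)).2
          ((hINV u v i (by omega) (by omega)).2 ⟨h1, h2⟩)
  have hlab : IsOverlapLabeling E k ls lp :=
    ⟨hlen_s, hlen_p, fun u v => ⟨fun h => ⟨w u v, (hov u v _).2 ⟨h, rfl⟩⟩,
      fun ⟨i, hi⟩ => ((hov u v i).1 hi).1⟩⟩
  refine ⟨⟨ls, lp, hlab, ?_⟩, Nat.sInf_le ⟨ls, lp, hlab⟩⟩
  intro u v hE
  have hset : {i | OverlapsBy (ls u) (lp v) i} = {w u v} := by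
    ext i
    simp only [Set.mem_setOf_eq, Set.mem_singleton_iff, hov u v i]
    exact ⟨fun h => h.2.symm, fun h => ⟨hE, h.symm⟩⟩
  unfold ov
  rw [hset]
  exact csInf_singleton _


end Readability
end

section
/- Let G = (V_s, V_p, E) be a bipartite graph whose underlying undirected graph on V_s ⊔ V_p is acyclic (a forest), and let w : E → {1,…,k} be a decomposition of G satisfying the P4-rule. Then there exists an overlap labeling ℓ of G of length k such that for every edge e ∈ E, the minimum overlap ov_ℓ(e) equals w(e). In particular, r(G) ≤ k. -/
namespace Readability

section S7

open SimpleGraph Sum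

variable {Vs Vp : Type*} (E : Vs → Vp → Prop) (wf : Vs → Vp → ℕ)

/-- one-step coordinate transfer along an edge of the underlying graph -/
def EW (x z : Vs ⊕ Vp) (t t' : ℕ) : Prop :=
  ∃ u v, E u v ∧ 1 ≤ t ∧ t ≤ wf u v ∧ t' = wf u v + 1 - t ∧
    ((x = inl u ∧ z = inr v) ∨ (x = inr v ∧ z = inl u))

lemma EW_symm {x z t t'} (h : EW E wf x z t t') : EW E wf z x t' t := by
  obtain ⟨u, v, he, h1, h2, h3, h4⟩ := h
  refine ⟨u, v, he, by omega, by omega, by omega, ?_⟩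
  tauto

lemma EW_adj {x z t t'} (h : EW E wf x z t t') : (underlyingGraph E).Adj x z := by
  obtain ⟨u, v, he, -, -, -, (⟨rfl, rfl⟩ | ⟨rfl, rfl⟩)⟩ := h
  · exact Or.inl ⟨u, v, rfl, rfl, he⟩
  · exact Or.inr ⟨u, v, rfl, rfl, he⟩

lemma EW_inv {x z t t' c} (h : EW E wf x z t t') (h' : EW E wf z x t' c) : c = t := by
  obtain ⟨u, v, he, h1, h2, h3, (⟨rfl, rfl⟩ | ⟨rfl, rfl⟩)⟩ := h <;>
    obtain ⟨u', v', he', g1, g2, g3, (⟨hz, hx⟩ | ⟨hz, hx⟩)⟩ := h' <;>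
      simp_all [Sum.inl.injEq, Sum.inr.injEq] <;> omega

def ValidW : ∀ {x y : Vs ⊕ Vp}, (underlyingGraph E).Walk x y → ℕ → ℕ → Prop
  | _, _, .nil, t, j => j = t
  | x, _, .cons (v := z) _ W, t, j => ∃ t', EW E wf x z t t' ∧ ValidW W t' j

@[simp] lemma validW_nil {x : Vs ⊕ Vp} (t j : ℕ) :
    ValidW E wf (.nil : (underlyingGraph E).Walk x x) t j ↔ j = t := Iff.rfl

@[simp] lemma validW_cons {x z y : Vs ⊕ Vp} (h : (underlyingGraph E).Adj x z)
    (W : (underlyingGraph E).Walk z y) (t j : ℕ) :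
    ValidW E wf (.cons h W) t j ↔ ∃ t', EW E wf x z t t' ∧ ValidW E wf W t' j := Iff.rfl

lemma validW_append {x y z : Vs ⊕ Vp} (P : (underlyingGraph E).Walk x y)
    (Q : (underlyingGraph E).Walk y z) (t j : ℕ) :
    ValidW E wf (P.append Q) t j ↔ ∃ c, ValidW E wf P t c ∧ ValidW E wf Q c j := by
  induction P generalizing t with
  | nil => simp
  | cons h W ih => simp only [Walk.cons_append, validW_cons, ih]; tauto

lemma validW_reverse {x y : Vs ⊕ Vp} (P : (underlyingGraph E).Walk x y) (t j : ℕ)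
    (h : ValidW E wf P t j) : ValidW E wf P.reverse j t := by
  induction P generalizing t with
  | nil => simpa using h.symm
  | cons ha W ih =>
    obtain ⟨t', h1, h2⟩ := h
    rw [Walk.reverse_cons, validW_append]
    exact ⟨t', ih _ h2, t, EW_symm E wf h1, rfl⟩

lemma eqvGen_to_validW {a b : (Vs ⊕ Vp) × ℕ}
    (h : Relation.EqvGen (fun a b => EW E wf a.1 b.1 a.2 b.2) a b) :
    ∃ W : (underlyingGraph E).Walk a.1 b.1, ValidW E wf W a.2 b.2 := by
  induction h with
  | rel a b hab => exact ⟨.cons (EW_adj E wf hab) .nil, b.2, hab, rfl⟩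
  | refl a => exact ⟨.nil, rfl⟩
  | symm a b _ ih => obtain ⟨W, hW⟩ := ih; exact ⟨W.reverse, validW_reverse E wf W _ _ hW⟩
  | trans a b c _ _ ih1 ih2 =>
    obtain ⟨W1, h1⟩ := ih1; obtain ⟨W2, h2⟩ := ih2
    exact ⟨W1.append W2, (validW_append E wf W1 W2 _ _).mpr ⟨b.2, h1, h2⟩⟩

lemma validW_to_path (hA : (underlyingGraph E).IsAcyclic) {x y : Vs ⊕ Vp}
    (W : (underlyingGraph E).Walk x y) (t j : ℕ) (h : ValidW E wf W t j) :
    ∃ P : (underlyingGraph E).Walk x y, P.IsPath ∧ ValidW E wf P t j := by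
  classical
  induction W generalizing t with
  | nil => exact ⟨.nil, Walk.IsPath.nil, h⟩
  | @cons x z y hadj W ih =>
    obtain ⟨t', hEW, hW⟩ := h
    obtain ⟨P', hP', hvP'⟩ := ih t' hW
    rcases Classical.em (x ∈ P'.support) with hx | hx
    · have hsplit := P'.take_spec hx
      have hQ : (P'.takeUntil x hx).IsPath := hP'.takeUntil hx
      have hR : (P'.dropUntil x hx).IsPath := hP'.dropUntil hx
      have hv2 : ValidW E wf ((P'.takeUntil x hx).append (P'.dropUntil x hx)) t' j := by
        rw [hsplit]; exact hvP'
      obtain ⟨c, hc1, hc2⟩ := (validW_append E wf _ _ _ _).mp hv2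
      have huniq : (⟨P'.takeUntil x hx, hQ⟩ : (underlyingGraph E).Path z x) =
          SimpleGraph.Path.singleton hadj.symm :=
        (SimpleGraph.isAcyclic_iff_path_unique.mp hA) _ _
      have hQeq : P'.takeUntil x hx = (SimpleGraph.Path.singleton hadj.symm).1 :=
        congrArg Subtype.val huniq
      rw [hQeq] at hc1
      obtain ⟨c', hc3, hc4⟩ := hc1
      have hc4' : c = c' := hc4
      have hct : c' = t := EW_inv E wf hEW hc3
      rw [hc4', hct] at hc2
      exact ⟨P'.dropUntil x hx, hR, hc2⟩
    · exact ⟨.cons hadj P', hP'.cons hx, t', hEW, hvP'⟩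

lemma walk_parity {x y : Vs ⊕ Vp} (W : (underlyingGraph E).Walk x y) :
    (Even W.length) ↔ (x.isLeft = y.isLeft) := by
  induction W with
  | nil => simp
  | @cons x z y hadj W ih =>
    have hflip : x.isLeft = !z.isLeft := by
      rcases hadj with ⟨u, v, rfl, rfl, -⟩ | ⟨u, v, rfl, rfl, -⟩ <;> simp
    simp only [Walk.length_cons, Nat.even_add_one, ih, hflip]
    cases z.isLeft <;> cases y.isLeft <;> simp

/-- weight attached to an (unordered) edge of the underlying graph, read off the endpoints -/
def wtOf : Vs ⊕ Vp → Vs ⊕ Vp → ℕ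
  | inl u, inr v => wf u v
  | inr v, inl u => wf u v
  | _, _ => 0

@[simp] lemma wtOf_inl_inr (u : Vs) (v : Vp) : wtOf wf (inl u) (inr v) = wf u v := rfl
@[simp] lemma wtOf_inr_inl (u : Vs) (v : Vp) : wtOf wf (inr v) (inl u) = wf u v := rfl

def wList : ∀ {x y : Vs ⊕ Vp}, (underlyingGraph E).Walk x y → List ℕ
  | _, _, .nil => []
  | x, _, .cons (v := z) _ W => wtOf wf x z :: wList W

@[simp] lemma wList_nil {x : Vs ⊕ Vp} :
    wList E wf (.nil : (underlyingGraph E).Walk x x) = [] := rfl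

@[simp] lemma wList_cons {x z y : Vs ⊕ Vp} (h : (underlyingGraph E).Adj x z)
    (W : (underlyingGraph E).Walk z y) :
    wList E wf (.cons h W) = wtOf wf x z :: wList E wf W := rfl

@[simp] lemma wList_length {x y : Vs ⊕ Vp} (W : (underlyingGraph E).Walk x y) :
    (wList E wf W).length = W.length := by
  induction W with
  | nil => rfl
  | cons h W ih => simp [ih]

def validL : List ℕ → ℕ → ℕ → Prop
  | [], t, j => j = t
  | m :: L, t, j => 1 ≤ t ∧ t ≤ m ∧ validL L (m + 1 - t) j

lemma validW_validL {x y : Vs ⊕ Vp} (W : (underlyingGraph E).Walk x y) (t j : ℕ)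
    (h : ValidW E wf W t j) : validL (wList E wf W) t j := by
  induction W generalizing t with
  | nil => exact h
  | @cons x z y hadj W ih =>
    obtain ⟨t', hEW, hW⟩ := h
    obtain ⟨u, v, he, h1, h2, h3, (⟨rfl, rfl⟩ | ⟨rfl, rfl⟩)⟩ := hEW
    · exact ⟨h1, h2, by
        rw [show wtOf wf (inl u) (inr v) = wf u v from rfl, ← h3]; exact ih t' hW⟩
    · exact ⟨h1, h2, by
        rw [show wtOf wf (inr v) (inl u) = wf u v from rfl, ← h3]; exact ih t' hW⟩

lemma wList_getD {x y : Vs ⊕ Vp} (W : (underlyingGraph E).Walk x y) :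
    ∀ n < W.length, (wList E wf W).getD n 0 = wtOf wf (W.getVert n) (W.getVert (n + 1)) := by
  induction W with
  | nil => simp
  | @cons x z y hadj W ih =>
    intro n hn
    cases n with
    | zero => simp [Walk.getVert_zero, Walk.getVert_cons_succ]
    | succ n =>
      simp only [Walk.length_cons] at hn
      rw [wList_cons, List.getD_cons_succ, Walk.getVert_cons_succ, Walk.getVert_cons_succ]
      exact ih n (by omega)

lemma getVert_mem_support {x y : Vs ⊕ Vp} (W : (underlyingGraph E).Walk x y) (n : ℕ) :
    W.getVert n ∈ W.support := by
  induction W generalizing n with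
  | nil => simp [Walk.getVert]
  | cons h W ih =>
    cases n with
    | zero => simp
    | succ n => rw [Walk.getVert_cons_succ]; simp [Walk.support_cons, ih n]

lemma getVert_inj {x y : Vs ⊕ Vp} (W : (underlyingGraph E).Walk x y) (hW : W.IsPath) :
    ∀ a b, a ≤ W.length → b ≤ W.length → W.getVert a = W.getVert b → a = b := by
  induction W with
  | nil => intro a b ha hb _; simp only [Walk.length_nil, Nat.le_zero] at ha hb; omega
  | @cons x z y hadj W ih =>
    have hcons := hW
    rw [Walk.cons_isPath_iff] at hcons
    intro a b ha hb hab
    match a, b with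
    | 0, 0 => rfl
    | 0, n + 1 =>
      exfalso
      rw [Walk.getVert_zero, Walk.getVert_cons_succ] at hab
      exact hcons.2 (hab ▸ getVert_mem_support E W n)
    | n + 1, 0 =>
      exfalso
      rw [Walk.getVert_zero, Walk.getVert_cons_succ] at hab
      exact hcons.2 (hab ▸ getVert_mem_support E W n)
    | a + 1, b + 1 =>
      rw [Walk.getVert_cons_succ, Walk.getVert_cons_succ] at hab
      simp only [Walk.length_cons] at ha hb
      exact congrArg Nat.succ (ih hcons.1 a b (by omega) (by omega) hab)

lemma validL_coords (L : List ℕ) (t j : ℕ) (h : validL L t j) :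
    ∃ c : ℕ → ℤ, c 0 = t ∧ c L.length = j ∧
      ∀ l < L.length, 1 ≤ c l ∧ c l ≤ (L.getD l 0 : ℤ) ∧
        c (l + 1) = (L.getD l 0 : ℤ) + 1 - c l := by
  induction L generalizing t with
  | nil =>
    refine ⟨fun _ => (t : ℤ), rfl, ?_, by simp⟩
    simpa using (congrArg (Nat.cast : ℕ → ℤ) (h : j = t)).symm
  | cons a L ih =>
    obtain ⟨h1, h2, h3⟩ := h
    obtain ⟨c', hc0, hce, hstep⟩ := ih _ h3
    refine ⟨fun l => Nat.rec (t : ℤ) (fun l _ => c' l) l, rfl, ?_, ?_⟩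
    · simpa using hce
    · intro l hl
      cases l with
      | zero =>
        refine ⟨?_, ?_, ?_⟩
        · show (1 : ℤ) ≤ (t : ℤ); exact_mod_cast h1
        · show (t : ℤ) ≤ _; simpa using (Nat.cast_le.mpr h2 : (t:ℤ) ≤ a)
        show c' 0 = (a : ℤ) + 1 - t
        rw [hc0]
        have : ((a + 1 - t : ℕ) : ℤ) = (a : ℤ) + 1 - t := by omega
        exact this
      | succ l =>
        simp only [List.length_cons] at hl
        obtain ⟨g1, g2, g3⟩ := hstep l (by omega)
        exact ⟨g1, by simpa using g2, by simpa using g3⟩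

lemma arith_main (L : List ℕ) (i : ℕ) (hi : 1 ≤ i) (hodd : Odd L.length)
    (h3 : 3 ≤ L.length)
    (h1 : validL L 1 i) (h2 : validL L i 1)
    (htriple : ∀ l, 2 ≤ l → l + 1 ≤ L.length →
      L.getD (l - 2) 0 ≤ L.getD (l - 1) 0 → L.getD l 0 ≤ L.getD (l - 1) 0 →
      L.getD (l - 2) 0 + L.getD l 0 ≤ L.getD (l - 1) 0) : False := by
  set r := L.length with hr
  obtain ⟨c1, hc10, hc1e, hstep1⟩ := validL_coords L 1 i h1
  obtain ⟨c2, hc20, hc2e, hstep2⟩ := validL_coords L i 1 h2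
  -- difference between the two coordinate sequences
  have hdiff : ∀ l ≤ r, c2 l - c1 l = if Even l then (i : ℤ) - 1 else 1 - i := by
    intro l hl
    induction l with
    | zero => simp [hc10, hc20]
    | succ l ihl =>
      have hl' : l < r := by omega
      obtain ⟨-, -, e1⟩ := hstep1 l hl'
      obtain ⟨-, -, e2⟩ := hstep2 l hl'
      have := ihl (by omega)
      rcases Nat.even_or_odd l with he | ho
      · simp [Nat.even_add_one, he, Nat.not_even_iff_odd.2, e1, e2] at *
        omega
      · have : ¬ Even l := Nat.not_even_iff_odd.mpr ho
        simp [Nat.even_add_one, this, e1, e2] at *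
        omega
  set D : ℕ → ℤ := fun l => if Even l then c1 l - 1 else c1 l with hD
  have hD0 : D 0 = 0 := by simp [hD, hc10]
  have hDm : ∀ l, 1 ≤ l → l ≤ r → D l = (L.getD (l - 1) 0 : ℤ) - D (l - 1) := by
    intro l h1l h2l
    obtain ⟨-, -, e1⟩ := hstep1 (l - 1) (by omega)
    have hl1 : l - 1 + 1 = l := by omega
    rw [hl1] at e1
    rcases Nat.even_or_odd l with he | ho
    · have hoddl1 : ¬ Even (l - 1) := by
        rcases he with ⟨p, hp⟩; intro ⟨q, hq⟩; omega
      simp only [hD, if_pos he, if_neg hoddl1, e1]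
      ring
    · have hnl : ¬ Even l := Nat.not_even_iff_odd.mpr ho
      have hevl1 : Even (l - 1) := by
        rcases ho with ⟨p, hp⟩; exact ⟨p, by omega⟩
      simp only [hD, if_neg hnl, if_pos hevl1, e1]
      ring
  have hDeven : ∀ l ≤ r, Even l → 0 ≤ D l := by
    intro l hl he
    have h1c : 1 ≤ c1 l := by
      rcases Nat.lt_or_ge l r with h | h
      · exact (hstep1 l h).1
      · have : l = r := by omega
        rw [this, hc1e]; exact_mod_cast hi
    simp only [hD, if_pos he]; omega
  have hDodd : ∀ l ≤ r, ¬ Even l → (i : ℤ) ≤ D l := by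
    intro l hl ho
    have h2c : 1 ≤ c2 l := by
      rcases Nat.lt_or_ge l r with h | h
      · exact (hstep2 l h).1
      · have : l = r := by omega
        rw [this, hc2e]; norm_num
    have hd := hdiff l hl
    rw [if_neg ho] at hd
    simp only [hD, if_neg ho]; omega
  have hDr : D r = i := by
    have : ¬ Even r := Nat.not_even_iff_odd.mpr hodd
    simp only [hD, if_neg this, hc1e]
    exact hc1e
  -- m in terms of D
  have hmD : ∀ l, 1 ≤ l → l ≤ r → (L.getD (l - 1) 0 : ℤ) = D l + D (l - 1) := by
    intro l a b; rw [hDm l a b]; ring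
  -- interior maximum
  obtain ⟨l', hl'mem, hl'max⟩ := Finset.exists_max_image (Finset.Icc 2 (r - 1))
    (fun l => L.getD (l - 1) 0) ⟨2, by rw [Finset.mem_Icc]; omega⟩
  rw [Finset.mem_Icc] at hl'mem
  -- m 1 ≤ m 2
  have hm12 : L.getD 0 0 ≤ L.getD 1 0 := by
    have e2 := hmD 2 (by omega) (by omega)
    have e1 := hmD 1 (by omega) (by omega)
    have := hDeven 2 (by omega) (by decide)
    have hD1 : D 1 = (L.getD 0 0 : ℤ) := by
      have := hDm 1 (by omega) (by omega); simpa [hD0] using this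
    simp only [show (2:ℕ) - 1 = 1 from rfl, show (1:ℕ) - 1 = 0 from rfl] at e2 e1
    omega
  -- m r ≤ m (r-1)
  have hmr : L.getD (r - 1) 0 ≤ L.getD (r - 2) 0 := by
    have er := hmD r (by omega) (by omega)
    have er1 := hmD (r - 1) (by omega) (by omega)
    have hr2 : ¬ Even (r - 2) := by
      have : ¬ Even r := Nat.not_even_iff_odd.mpr hodd
      rcases Nat.even_or_odd (r - 2) with h | h
      · exfalso; rcases h with ⟨p, hp⟩; exact this ⟨p + 1, by omega⟩
      · exact Nat.not_even_iff_odd.mpr h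
    have h1 := hDodd (r - 2) (by omega) hr2
    have h2 := hDeven (r - 1) (by omega) (by
      rcases Nat.even_or_odd (r - 1) with h | h
      · exact h
      · exfalso; exact (Nat.not_even_iff_odd.mpr hodd) (by rcases h with ⟨p, hp⟩; exact ⟨p + 1, by omega⟩))
    have hrr : r - 1 - 1 = r - 2 := by omega
    rw [hrr] at er1
    omega
  -- l' is a local max
  have hleft : L.getD (l' - 2) 0 ≤ L.getD (l' - 1) 0 := by
    rcases Nat.lt_or_ge (l' - 1) 2 with h | h
    · -- l' = 2
      have : l' = 2 := by omega
      subst this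
      simpa using hm12
    · have := hl'max (l' - 1) (by rw [Finset.mem_Icc]; omega)
      simpa [show l' - 1 - 1 = l' - 2 by omega] using this
  have hright : L.getD l' 0 ≤ L.getD (l' - 1) 0 := by
    rcases Nat.lt_or_ge (r - 1) (l' + 1) with h | h
    · -- l' = r - 1
      have : l' = r - 1 := by omega
      subst this
      simpa [show r - 1 + 1 - 1 = r - 1 by omega, show r - 1 - 1 = r - 2 by omega] using hmr
    · have := hl'max (l' + 1) (by rw [Finset.mem_Icc]; omega)
      simpa [show l' + 1 - 1 = l' by omega] using this
  have hsum := htriple l' hl'mem.1 (by omega) hleft hright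
  -- translate to D and contradict
  have e1 := hmD (l' - 1) (by omega) (by omega)
  have e2 := hmD l' (by omega) (by omega)
  have e3 := hmD (l' + 1) (by omega) (by omega)
  rw [show l' - 1 - 1 = l' - 2 by omega] at e1
  rw [show l' + 1 - 1 = l' by omega] at e3
  have hcast : (L.getD (l' - 2) 0 : ℤ) + (L.getD l' 0 : ℤ) ≤ (L.getD (l' - 1) 0 : ℤ) := by
    exact_mod_cast hsum
  have hi' : (1 : ℤ) ≤ (i : ℤ) := by exact_mod_cast hi
  have hev2 : Even (l' - 2) ↔ Even l' := by
    rw [Nat.even_sub hl'mem.1]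
    simp
  rcases Nat.even_or_odd l' with he | ho
  · have hA' := hDeven (l' - 2) (by omega) (hev2.mpr he)
    have hB' := hDodd (l' + 1) (by omega)
      (by simp [Nat.even_add_one, he])
    omega
  · have hA' := hDodd (l' - 2) (by omega)
      (by rw [hev2]; exact Nat.not_even_iff_odd.mpr ho)
    have hB' := hDeven (l' + 1) (by omega)
      (by simp [Nat.even_add_one, Nat.not_even_iff_odd.mpr ho])
    omega

lemma path_triple (hA : (underlyingGraph E).IsAcyclic) (hP4 : SatisfiesP4Rule E wf)
    {u : Vs} {v : Vp} (P : (underlyingGraph E).Walk (inl u) (inr v)) (hpath : P.IsPath) :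
    ∀ l, 2 ≤ l → l + 1 ≤ P.length →
      (wList E wf P).getD (l - 2) 0 ≤ (wList E wf P).getD (l - 1) 0 →
      (wList E wf P).getD l 0 ≤ (wList E wf P).getD (l - 1) 0 →
      (wList E wf P).getD (l - 2) 0 + (wList E wf P).getD l 0 ≤ (wList E wf P).getD (l - 1) 0 := by
  intro l hl2 hlr
  obtain ⟨n, rfl⟩ : ∃ n, l = n + 2 := ⟨l - 2, by omega⟩
  simp only [show n + 2 - 2 = n from rfl, show n + 2 - 1 = n + 1 from rfl]
  have A1 : (underlyingGraph E).Adj (P.getVert n) (P.getVert (n + 1)) :=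
    P.adj_getVert_succ (by omega)
  have A2 : (underlyingGraph E).Adj (P.getVert (n + 1)) (P.getVert (n + 2)) :=
    P.adj_getVert_succ (by omega)
  have A3 : (underlyingGraph E).Adj (P.getVert (n + 2)) (P.getVert (n + 3)) :=
    P.adj_getVert_succ (by omega)
  have g1 := wList_getD E wf P n (by omega)
  have g2 := wList_getD E wf P (n + 1) (by omega)
  have g3 := wList_getD E wf P (n + 2) (by omega)
  have hne13 : P.getVert (n + 1) ≠ P.getVert (n + 3) := fun h => by
    have := getVert_inj E P hpath (n + 1) (n + 3) (by omega) (by omega) h; omega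
  have hne02 : P.getVert n ≠ P.getVert (n + 2) := fun h => by
    have := getVert_inj E P hpath n (n + 2) (by omega) (by omega) h; omega
  have hnadj : ¬ (underlyingGraph E).Adj (P.getVert (n + 3)) (P.getVert n) := by
    intro h'
    have hW3 : ((Walk.cons A3.symm (Walk.cons A2.symm (Walk.cons A1.symm Walk.nil))) :
        (underlyingGraph E).Walk (P.getVert (n + 3)) (P.getVert n)).IsPath := by
      have d32 : P.getVert (n + 3) ≠ P.getVert (n + 2) := fun h => by
        have := getVert_inj E P hpath (n + 3) (n + 2) (by omega) (by omega) h; omega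
      have d31 : P.getVert (n + 3) ≠ P.getVert (n + 1) := hne13.symm
      have d30 : P.getVert (n + 3) ≠ P.getVert n := fun h => by
        have := getVert_inj E P hpath (n + 3) n (by omega) (by omega) h; omega
      have d21 : P.getVert (n + 2) ≠ P.getVert (n + 1) := fun h => by
        have := getVert_inj E P hpath (n + 2) (n + 1) (by omega) (by omega) h; omega
      have d20 : P.getVert (n + 2) ≠ P.getVert n := hne02.symm
      have d10 : P.getVert (n + 1) ≠ P.getVert n := fun h => by
        have := getVert_inj E P hpath (n + 1) n (by omega) (by omega) h; omega
      simp [Walk.cons_isPath_iff, Walk.support_cons, d32, d31, d30, d21, d20, d10]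
    have h1 : (⟨_, hW3⟩ : (underlyingGraph E).Path (P.getVert (n + 3)) (P.getVert n)) =
        SimpleGraph.Path.singleton h' :=
      (SimpleGraph.isAcyclic_iff_path_unique.mp hA) _ _
    have h2 := congrArg (fun q => q.1.length) h1
    simp [SimpleGraph.Path.singleton] at h2
  rcases A2 with ⟨s2, p1, hb, hc, he2⟩ | ⟨s2, p1, hb, hc, he2⟩
  · -- getVert (n+1) = inl s2, getVert (n+2) = inr p1
    rcases A1 with ⟨u', v', ha, hb', -⟩ | ⟨s2', p2, ha, hb', he1⟩
    · rw [hb] at hb'; exact absurd hb' (by simp)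
    · rw [hb] at hb'
      have hs2 : s2' = s2 := by simpa using hb'.symm
      rw [hs2] at he1
      rcases A3 with ⟨u', v', hc', hd, -⟩ | ⟨s1, p1', hc', hd, he3⟩
      · rw [hc] at hc'; exact absurd hc' (by simp)
      · rw [hc] at hc'
        have hp1 : p1' = p1 := by simpa using hc'.symm
        rw [hp1] at he3
        have m1 : (wList E wf P).getD n 0 = wf s2 p2 := by rw [g1, ha, hb]; simp
        have m2 : (wList E wf P).getD (n + 1) 0 = wf s2 p1 := by rw [g2, show n+1+1 = n+2 from rfl, hb, hc]; simp
        have m3 : (wList E wf P).getD (n + 2) 0 = wf s1 p1 := by rw [g3, show n+2+1 = n+3 from rfl, hc, hd]; simp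
        intro hle1 hle2
        have hind : InducedP4 E s1 s2 p1 p2 := by
          refine ⟨?_, ?_, he3, he2, he1, ?_⟩
          · intro h; rw [hd, hb] at hne13; exact hne13 (by rw [h])
          · intro h; rw [hc, ha] at hne02; exact hne02 (by rw [h])
          · intro hE
            exact hnadj (by rw [hd, ha]; exact Or.inl ⟨s1, p2, rfl, rfl, hE⟩)
        have := hP4 s1 s2 p1 p2 hind (by omega)
        omega
  · -- getVert (n+1) = inr p1, getVert (n+2) = inl s2
    rcases A1 with ⟨s1, p1', ha, hb', he1⟩ | ⟨u', v', ha, hb', -⟩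
    · rw [hb] at hb'
      have hp1 : p1' = p1 := by simpa using hb'.symm
      rw [hp1] at he1
      rcases A3 with ⟨s2', p2, hc', hd, he3⟩ | ⟨u', v', hc', hd, -⟩
      · rw [hc] at hc'
        have hs2 : s2' = s2 := by simpa using hc'.symm
        rw [hs2] at he3
        have m1 : (wList E wf P).getD n 0 = wf s1 p1 := by rw [g1, ha, hb]; simp
        have m2 : (wList E wf P).getD (n + 1) 0 = wf s2 p1 := by rw [g2, show n+1+1 = n+2 from rfl, hb, hc]; simp
        have m3 : (wList E wf P).getD (n + 2) 0 = wf s2 p2 := by rw [g3, show n+2+1 = n+3 from rfl, hc, hd]; simp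
        intro hle1 hle2
        have hind : InducedP4 E s1 s2 p1 p2 := by
          refine ⟨?_, ?_, he1, he2, he3, ?_⟩
          · intro h; rw [ha, hc] at hne02; exact hne02 (by rw [h])
          · intro h; rw [hb, hd] at hne13; exact hne13 (by rw [h])
          · intro hE
            exact hnadj (by rw [hd, ha]; exact Or.inr ⟨s1, p2, rfl, rfl, hE⟩)
        have := hP4 s1 s2 p1 p2 hind (by omega)
        omega
      · rw [hc] at hc'; exact absurd hc' (by simp)
    · rw [hb] at hb'; exact absurd hb' (by simp)

/-- the transfer relation on positions -/
def TR : ((Vs ⊕ Vp) × ℕ) → ((Vs ⊕ Vp) × ℕ) → Prop := fun a b => EW E wf a.1 b.1 a.2 b.2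

lemma overlap_master (hA : (underlyingGraph E).IsAcyclic) (hP4 : SatisfiesP4Rule E wf)
    {u : Vs} {v : Vp} {i : ℕ} (hi : 1 ≤ i)
    (H : ∀ t, 1 ≤ t → t ≤ i →
      Relation.EqvGen (TR E wf) (inl u, t) (inr v, i + 1 - t)) :
    E u v ∧ i = wf u v := by
  obtain ⟨W1, hW1⟩ := eqvGen_to_validW E wf (H 1 le_rfl hi)
  obtain ⟨P1, hP1path, hP1v⟩ := validW_to_path E wf hA W1 _ _ hW1
  obtain ⟨W2, hW2⟩ := eqvGen_to_validW E wf (H i hi le_rfl)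
  obtain ⟨P2, hP2path, hP2v⟩ := validW_to_path E wf hA W2 _ _ hW2
  have hPeq : P2 = P1 := congrArg Subtype.val
    ((SimpleGraph.isAcyclic_iff_path_unique.mp hA)
      (⟨P2, hP2path⟩ : (underlyingGraph E).Path _ _) ⟨P1, hP1path⟩)
  rw [hPeq] at hP2v
  rw [show i + 1 - 1 = i by omega] at hP1v
  rw [show i + 1 - i = 1 by omega] at hP2v
  have hodd : Odd P1.length := by
    rw [Nat.not_even_iff_odd.symm, walk_parity E P1]
    simp
  have hL1 := validW_validL E wf P1 1 i hP1v
  have hL2 := validW_validL E wf P1 i 1 hP2v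
  rcases Nat.lt_or_ge P1.length 3 with hsmall | hbig
  · have hlen : P1.length = 1 := by
      rcases hodd with ⟨p, hp⟩; omega
    have hadj : (underlyingGraph E).Adj (P1.getVert 0) (P1.getVert 1) :=
      P1.adj_getVert_succ (by omega)
    have hv0 : P1.getVert 0 = inl u := P1.getVert_zero
    have hv1 : P1.getVert 1 = inr v := by rw [← hlen]; exact P1.getVert_length
    rw [hv0, hv1] at hadj
    have hE : E u v := by
      rcases hadj with ⟨u', v', h1, h2, he⟩ | ⟨u', v', h1, h2, he⟩
      · rw [show u' = u by simpa using h1.symm, show v' = v by simpa using h2.symm] at he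
        exact he
      · exact absurd h1 (by simp)
    refine ⟨hE, ?_⟩
    obtain ⟨a, hLa⟩ := List.length_eq_one_iff.mp
      (show (wList E wf P1).length = 1 by rw [wList_length]; exact hlen)
    have hga := wList_getD E wf P1 0 (by omega)
    rw [hLa] at hL1 hga
    obtain ⟨-, -, h2a⟩ := hL1
    have h2a' : i = a + 1 - 1 := h2a
    have hwa : wf u v = a := by
      rw [hv0, hv1] at hga
      simpa using hga.symm
    omega
  · exfalso
    refine arith_main (wList E wf P1) i hi ?_ ?_ hL1 hL2 ?_
    · rw [wList_length]; exact hodd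
    · rw [wList_length]; exact hbig
    · intro l a b
      exact path_triple E wf hA hP4 P1 hP1path l a (by rwa [wList_length] at b)

lemma exists_good_labeling [Countable Vs] [Countable Vp] (k : ℕ)
    (hA : (underlyingGraph E).IsAcyclic) (hw : IsDecomposition E k wf)
    (hP4 : SatisfiesP4Rule E wf) :
    ∃ (ls : Vs → List ℕ) (lp : Vp → List ℕ), IsOverlapLabeling E k ls lp ∧
      ∀ u v, E u v → ov (ls u) (lp v) = wf u v := by
  obtain ⟨f, hf⟩ := exists_injective_nat (Quot (TR E wf))
  set sym : (Vs ⊕ Vp) → ℕ → ℕ := fun x n => f (Quot.mk _ (x, n)) with hsym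
  set ls : Vs → List ℕ := fun u => (List.range k).map fun n => sym (inl u) (k - n) with hls
  set lp : Vp → List ℕ := fun v => (List.range k).map fun n => sym (inr v) (n + 1) with hlp
  have hlen_s : ∀ u, (ls u).length = k := fun u => by simp [hls]
  have hlen_p : ∀ v, (lp v).length = k := fun v => by simp [hlp]
  have hunfold : ∀ (u : Vs) (v : Vp) (i : ℕ), 1 ≤ i → i ≤ k →
      (((ls u).drop ((ls u).length - i) = (lp v).take i) ↔
        ∀ t, 1 ≤ t → t ≤ i →
          Relation.EqvGen (TR E wf) (inl u, t) (inr v, i + 1 - t)) := by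
    intro u v i h1 h2
    have hld : ((ls u).drop ((ls u).length - i)).length = i := by
      rw [List.length_drop, hlen_s]; omega
    have hlt : ((lp v).take i).length = i := by
      rw [List.length_take, hlen_p]; omega
    have hget1 : ∀ (δ : ℕ) (hδ : δ < i),
        ((ls u).drop ((ls u).length - i))[δ]'(by omega) = sym (inl u) (i - δ) := by
      intro δ hδ
      rw [List.getElem_drop]
      have hidx : (ls u).length - i + δ < k := by rw [hlen_s]; omega
      simp only [hls, List.getElem_map, List.getElem_range]
      congr 1
      rw [hlen_s]
      omega
    have hget2 : ∀ (δ : ℕ) (hδ : δ < i),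
        ((lp v).take i)[δ]'(by omega) = sym (inr v) (δ + 1) := by
      intro δ hδ
      rw [List.getElem_take]
      simp [hlp]
    constructor
    · intro heq t ht1 ht2
      have hδ : i - t < i := by omega
      have hpt : ((ls u).drop ((ls u).length - i))[i - t]'(by omega) =
          ((lp v).take i)[i - t]'(by omega) := by
        simp only [heq]
      rw [hget1 _ hδ, hget2 _ hδ] at hpt
      have hsymeq : sym (inl u) (i - (i - t)) = sym (inr v) (i - t + 1) := hpt
      rw [show i - (i - t) = t by omega, show i - t + 1 = i + 1 - t by omega] at hsymeq
      exact Quot.eqvGen_exact (hf hsymeq)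
    · intro H
      apply List.ext_getElem (by omega)
      intro δ hδ1 hδ2
      have hδ : δ < i := by omega
      rw [hget1 δ hδ, hget2 δ hδ]
      have := H (i - δ) (by omega) (by omega)
      rw [show i + 1 - (i - δ) = δ + 1 by omega] at this
      exact congrArg f (Quot.eqvGen_sound this)
  have main : ∀ (u : Vs) (v : Vp) (i : ℕ), OverlapsBy (ls u) (lp v) i ↔ (E u v ∧ i = wf u v) := by
    intro u v i
    constructor
    · rintro ⟨h1, h2, h3⟩
      have h2' : i ≤ k := by rw [hlen_s, hlen_p] at h2; omega
      exact overlap_master E wf hA hP4 h1 ((hunfold u v i h1 h2').mp h3)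
    · rintro ⟨hE, rfl⟩
      obtain ⟨hw1, hw2⟩ := hw u v hE
      refine ⟨hw1, by rw [hlen_s, hlen_p]; omega, ?_⟩
      rw [hunfold u v _ hw1 hw2]
      intro t ht1 ht2
      exact Relation.EqvGen.rel _ _
        ⟨u, v, hE, ht1, ht2, by omega, Or.inl ⟨rfl, rfl⟩⟩
  refine ⟨ls, lp, ⟨hlen_s, hlen_p, ?_⟩, ?_⟩
  · intro u v
    constructor
    · intro hE
      exact ⟨wf u v, (main u v _).mpr ⟨hE, rfl⟩⟩
    · rintro ⟨i, hov⟩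
      exact ((main u v i).mp hov).1
  · intro u v hE
    have hset : {i | OverlapsBy (ls u) (lp v) i} = {wf u v} := by
      ext i
      simp only [Set.mem_setOf_eq, Set.mem_singleton_iff, main u v i]
      exact ⟨fun h => h.2, fun h => ⟨hE, h⟩⟩
    rw [ov, hset, csInf_singleton]

end S7

/-- If the underlying undirected graph of the bipartite graph `G` is acyclic (a
forest) and `w : E → {1,…,k}` is a decomposition satisfying the P4-rule, then there is an
overlap labeling `ℓ` of `G` of length `k` with `ov_ℓ(e) = w(e)` on every edge; in particular
`r(G) ≤ k`. -/
theorem statement7 {Vs Vp : Type*} [Fintype Vs] [Fintype Vp] (E : Vs → Vp → Prop)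
    (hA : (underlyingGraph E).IsAcyclic) (k : ℕ) (w : Vs → Vp → ℕ)
    (hw : IsDecomposition E k w) (hP : SatisfiesP4Rule E w) :
    (∃ (ls : Vs → List ℕ) (lp : Vp → List ℕ), IsOverlapLabeling E k ls lp ∧
        ∀ u v, E u v → ov (ls u) (lp v) = w u v) ∧
      bReadability E ≤ k := by
  obtain ⟨ls, lp, hlab, hov⟩ := exists_good_labeling E w k hA hw hP
  exact ⟨⟨ls, lp, hlab, hov⟩, Nat.sInf_le ⟨ls, lp, hlab⟩⟩

end Readability
end

section
/- Let ℓ be an overlap labeling of a bipartite graph G = (V_s, V_p, E). Then the ℓ-decomposition of G satisfies the HUB-rule: (i) for every i ≥ 1, the subgraph G_i with edge set {e ∈ E : ov_ℓ(e) = i} is a disjoint union of bicliques (equivalently, whenever (s1,p1), (s2,p1), (s2,p2) are edges of G_i, so is (s1,p2)); and (ii) whenever two distinct vertices u, v in the same part are non-isolated twins in G_i for some i ≥ 2, then u and v are twins in G_j for every j with 1 ≤ j ≤ i−1. -/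
namespace Readability

lemma suffix_mono {α : Type*} {x y : List α} {i j : ℕ} (hlen : x.length = y.length)
    (hi : i ≤ x.length) (hj : j ≤ i)
    (h : x.drop (x.length - i) = y.drop (y.length - i)) :
    x.drop (x.length - j) = y.drop (y.length - j) := by
  have hx : x.length - j = (x.length - i) + (i - j) := by omega
  have hy : y.length - j = (y.length - i) + (i - j) := by omega
  rw [hx, hy, ← List.drop_drop, ← List.drop_drop, h]

lemma prefix_mono {α : Type*} {x y : List α} {i j : ℕ} (hj : j ≤ i)
    (h : x.take i = y.take i) : x.take j = y.take j := by
  have := congrArg (List.take j) h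
  simpa [List.take_take, Nat.min_eq_left hj] using this

/-- If `ℓ = (ls, lp)` is an overlap labeling of a bipartite graph `G`, then the
`ℓ`-decomposition `e ↦ ov_ℓ(e)` satisfies the HUB-rule: every level graph `G_i` (edges of
minimum overlap exactly `i`) is a disjoint union of bicliques, and non-isolated twins in a
level `G_i` with `i ≥ 2` are twins in all lower levels. -/
theorem statement8 {Vs Vp : Type*} (E : Vs → Vp → Prop) (r : ℕ)
    (ls : Vs → List ℕ) (lp : Vp → List ℕ) (h : IsOverlapLabeling E r ls lp) :
    SatisfiesHUBRule E (fun u v => ov (ls u) (lp v)) := by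
  obtain ⟨hls, hlp, hE⟩ := h
  have hmem : ∀ u v, E u v → OverlapsBy (ls u) (lp v) (ov (ls u) (lp v)) := by
    intro u v huv
    exact Nat.sInf_mem ((hE u v).1 huv)
  have hle : ∀ u v k, OverlapsBy (ls u) (lp v) k → ov (ls u) (lp v) ≤ k :=
    fun u v k hk => Nat.sInf_le hk
  refine ⟨?_, ?_, ?_⟩
  · -- Part (i): each level is a union of bicliques
    intro i hi s1 s2 p1 p2 h11 h21 h22
    obtain ⟨e11, w11⟩ := h11
    obtain ⟨e21, w21⟩ := h21
    obtain ⟨e22, w22⟩ := h22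
    replace w11 : ov (ls s1) (lp p1) = i := w11
    replace w21 : ov (ls s2) (lp p1) = i := w21
    replace w22 : ov (ls s2) (lp p2) = i := w22
    have o11 : OverlapsBy (ls s1) (lp p1) i := by
      rw [← w11]; exact hmem s1 p1 e11
    have o21 : OverlapsBy (ls s2) (lp p1) i := by
      rw [← w21]; exact hmem s2 p1 e21
    have o22 : OverlapsBy (ls s2) (lp p2) i := by
      rw [← w22]; exact hmem s2 p2 e22
    obtain ⟨hi1, hi2, heq11⟩ := o11
    obtain ⟨-, -, heq21⟩ := o21
    obtain ⟨-, hi2', heq22⟩ := o22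
    have hir : i ≤ r := by
      have h2 := hi2
      simp only [hls, hlp] at h2; omega
    have hsuf : (ls s1).drop ((ls s1).length - i) = (ls s2).drop ((ls s2).length - i) :=
      heq11.trans heq21.symm
    have o12 : OverlapsBy (ls s1) (lp p2) i :=
      ⟨hi1, by simp only [hls, hlp]; omega, hsuf.trans heq22⟩
    have e12 : E s1 p2 := (hE s1 p2).2 ⟨i, o12⟩
    refine ⟨e12, ?_⟩
    show ov (ls s1) (lp p2) = i
    have hub : ov (ls s1) (lp p2) ≤ i := hle _ _ _ o12
    have omem := hmem s1 p2 e12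
    by_contra hne
    have hk : ov (ls s1) (lp p2) < i := lt_of_le_of_ne hub hne
    obtain ⟨hk1, hk2, hkeq⟩ := omem
    have hsuf' : (ls s1).drop ((ls s1).length - ov (ls s1) (lp p2))
        = (ls s2).drop ((ls s2).length - ov (ls s1) (lp p2)) :=
      suffix_mono (by simp only [hls]) (by rw [hls]; exact hir) (le_of_lt hk) hsuf
    have o2k : OverlapsBy (ls s2) (lp p2) (ov (ls s1) (lp p2)) :=
      ⟨hk1, by simp only [hls, hlp]; simp only [hls, hlp] at hk2; omega, hsuf'.symm.trans hkeq⟩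
    have := hle s2 p2 _ o2k
    omega
  · -- Part (ii): twins in Vs
    intro i hi2 u v huv hex htwin j hj1 hji p
    obtain ⟨p0, hp0⟩ := hex
    have hvp0 := (htwin p0).1 hp0
    obtain ⟨eu0, wu0⟩ := hp0
    obtain ⟨ev0, wv0⟩ := hvp0
    replace wu0 : ov (ls u) (lp p0) = i := wu0
    replace wv0 : ov (ls v) (lp p0) = i := wv0
    have ou : OverlapsBy (ls u) (lp p0) i := by
      rw [← wu0]; exact hmem u p0 eu0
    have ov0 : OverlapsBy (ls v) (lp p0) i := by
      rw [← wv0]; exact hmem v p0 ev0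
    have hir : i ≤ r := by
      have := ou.2.1
      simp only [hls, hlp] at this; omega
    have hsuf : (ls u).drop ((ls u).length - i) = (ls v).drop ((ls v).length - i) :=
      ou.2.2.trans ov0.2.2.symm
    have key : ∀ a b : Vs,
        (ls a).drop ((ls a).length - i) = (ls b).drop ((ls b).length - i) →
        ∀ q, (E a q ∧ ov (ls a) (lp q) = j) → (E b q ∧ ov (ls b) (lp q) = j) := by
      intro a b hab q hq
      obtain ⟨haq, hwj⟩ := hq
      have oa : OverlapsBy (ls a) (lp q) j := by
        rw [← hwj]; exact hmem a q haq
      obtain ⟨hja, hjb, hjc⟩ := oa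
      have hji' : j ≤ i := by omega
      have hsj : (ls a).drop ((ls a).length - j) = (ls b).drop ((ls b).length - j) :=
        suffix_mono (by simp only [hls]) (by rw [hls]; exact hir) hji' hab
      have ob : OverlapsBy (ls b) (lp q) j :=
        ⟨hja, by simp only [hls, hlp]; simp only [hls, hlp] at hjb; omega, hsj.symm.trans hjc⟩
      have ebq : E b q := (hE b q).2 ⟨j, ob⟩
      refine ⟨ebq, ?_⟩
      have hub : ov (ls b) (lp q) ≤ j := hle _ _ _ ob
      by_contra hne
      have hk : ov (ls b) (lp q) < j := lt_of_le_of_ne hub hne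
      obtain ⟨hk1, hk2, hkeq⟩ := hmem b q ebq
      have hsk : (ls a).drop ((ls a).length - ov (ls b) (lp q))
          = (ls b).drop ((ls b).length - ov (ls b) (lp q)) :=
        suffix_mono (by simp only [hls]) (by rw [hls]; exact hir) (by omega) hab
      have oak : OverlapsBy (ls a) (lp q) (ov (ls b) (lp q)) :=
        ⟨hk1, by simp only [hls, hlp]; simp only [hls, hlp] at hk2; omega, hsk.trans hkeq⟩
      have := hle a q _ oak
      omega
    exact ⟨fun hp => key u v hsuf p hp, fun hp => key v u hsuf.symm p hp⟩
  · -- Part (iii): twins in Vp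
    intro i hi2 u v huv hex htwin j hj1 hji s
    obtain ⟨s0, hs0⟩ := hex
    have hvs0 := (htwin s0).1 hs0
    obtain ⟨eu0, wu0⟩ := hs0
    obtain ⟨ev0, wv0⟩ := hvs0
    replace wu0 : ov (ls s0) (lp u) = i := wu0
    replace wv0 : ov (ls s0) (lp v) = i := wv0
    have ou : OverlapsBy (ls s0) (lp u) i := by
      rw [← wu0]; exact hmem s0 u eu0
    have ov0 : OverlapsBy (ls s0) (lp v) i := by
      rw [← wv0]; exact hmem s0 v ev0
    have hir : i ≤ r := by
      have := ou.2.1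
      simp only [hls, hlp] at this; omega
    have hpre : (lp u).take i = (lp v).take i :=
      ou.2.2.symm.trans ov0.2.2
    have key : ∀ a b : Vp, (lp a).take i = (lp b).take i →
        ∀ q, (E q a ∧ ov (ls q) (lp a) = j) → (E q b ∧ ov (ls q) (lp b) = j) := by
      intro a b hab q hq
      obtain ⟨haq, hwj⟩ := hq
      have oa : OverlapsBy (ls q) (lp a) j := by
        rw [← hwj]; exact hmem q a haq
      obtain ⟨hja, hjb, hjc⟩ := oa
      have hji' : j ≤ i := by omega
      have hsj : (lp a).take j = (lp b).take j := prefix_mono hji' hab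
      have ob : OverlapsBy (ls q) (lp b) j :=
        ⟨hja, by simp only [hls, hlp]; simp only [hls, hlp] at hjb; omega, hjc.trans hsj⟩
      have ebq : E q b := (hE q b).2 ⟨j, ob⟩
      refine ⟨ebq, ?_⟩
      have hub : ov (ls q) (lp b) ≤ j := hle _ _ _ ob
      by_contra hne
      have hk : ov (ls q) (lp b) < j := lt_of_le_of_ne hub hne
      obtain ⟨hk1, hk2, hkeq⟩ := hmem q b ebq
      have hsk : (lp a).take (ov (ls q) (lp b)) = (lp b).take (ov (ls q) (lp b)) :=
        prefix_mono (by omega) hab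
      have oak : OverlapsBy (ls q) (lp a) (ov (ls q) (lp b)) :=
        ⟨hk1, by simp only [hls, hlp]; simp only [hls, hlp] at hk2; omega, hkeq.trans hsk.symm⟩
      have := hle q a _ oak
      omega
    exact ⟨fun hp => key u v hpre s hp, fun hp => key v u hpre.symm s hp⟩

end Readability
end

section
/- For every bipartite graph G = (V_s, V_p, E), hub(G) ≤ r(G) ≤ 2^{hub(G)} − 1, where hub(G) is the HUB number of G and r(G) is the readability of G. -/
namespace Readability

/-! ### Auxiliary development for Statement 9 -/

namespace HubAux

attribute [local instance] Classical.propDecidable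

/-- 2-adic valuation. -/
def nu (n : ℕ) : ℕ := n.factorization 2

lemma nu_two_pow (m : ℕ) : nu (2 ^ m) = m := by
  simp [nu, Nat.Prime.factorization_pow Nat.prime_two]

lemma nu_eq_iff {n a : ℕ} (hn : n ≠ 0) : nu n = a ↔ 2 ^ a ∣ n ∧ ¬ 2 ^ (a + 1) ∣ n := by
  unfold nu
  constructor
  · rintro rfl
    refine ⟨Nat.ordProj_dvd n 2, ?_⟩
    rw [Nat.Prime.pow_dvd_iff_le_factorization Nat.prime_two hn]; omega
  · rintro ⟨h1, h2⟩
    rw [Nat.Prime.pow_dvd_iff_le_factorization Nat.prime_two hn] at h1 h2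
    omega

lemma nu_sub {i q : ℕ} (h1 : 1 ≤ q) (h2 : q < 2 ^ i) : nu (2 ^ i - q) = nu q := by
  have hq : q ≠ 0 := by omega
  have hlt : 2 ^ i - q ≠ 0 := by omega
  obtain ⟨hd, hnd⟩ := (nu_eq_iff hq).mp rfl
  have ha : 2 ^ nu q ≤ q := Nat.le_of_dvd (by omega) hd
  have hai : nu q < i := by
    by_contra hcon
    have : 2 ^ i ≤ 2 ^ nu q := Nat.pow_le_pow_right (by norm_num) (by omega)
    omega
  rw [nu_eq_iff hlt]
  refine ⟨Nat.dvd_sub (pow_dvd_pow 2 hai.le) hd, ?_⟩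
  intro hc
  have hdd : 2 ^ (nu q + 1) ∣ 2 ^ i := pow_dvd_pow 2 (by omega)
  have := Nat.dvd_sub hdd hc
  rw [Nat.sub_sub_self h2.le] at this
  exact hnd this

lemma nu_palindrome {j : ℕ} (hj : 1 ≤ j) (h : ∀ r, 1 ≤ r → r ≤ j → nu r = nu (j + 1 - r)) :
    ∃ i, 1 ≤ i ∧ j = 2 ^ i - 1 := by
  set m := Nat.log 2 j with hm
  have h1 : 2 ^ m ≤ j := Nat.pow_log_le_self 2 (by omega)
  have h2 : j < 2 ^ (m + 1) := Nat.lt_pow_succ_log_self (by norm_num) j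
  have hpow : 2 ^ (m + 1) = 2 ^ m * 2 := pow_succ 2 m
  have hp : 0 < 2 ^ m := Nat.pow_pos (by norm_num)
  refine ⟨m + 1, by omega, ?_⟩
  have key := h (2 ^ m) Nat.one_le_two_pow h1
  rw [nu_two_pow] at key
  by_cases hcase : j + 1 = 2 ^ m
  · omega
  have hne : j + 1 - 2 ^ m ≠ 0 := by omega
  obtain ⟨hd, -⟩ := (nu_eq_iff hne).mp key.symm
  have hdvd : 2 ^ m ∣ j + 1 := by
    have := Nat.dvd_add hd (dvd_refl (2 ^ m))
    rwa [Nat.sub_add_cancel (by omega)] at this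
  obtain ⟨c, hc⟩ := hdvd
  have hcle : c ≤ 2 := by
    by_contra hcc
    have : 2 ^ m * 3 ≤ 2 ^ m * c := Nat.mul_le_mul_left _ (by omega)
    omega
  have hcge : 2 ≤ c := by
    by_contra hcc
    have : 2 ^ m * c ≤ 2 ^ m * 1 := Nat.mul_le_mul_left _ (by omega)
    omega
  have : c = 2 := by omega
  subst this
  omega

lemma getElem?_mid (A T : List ℕ) (c : ℕ) : (A ++ c :: T)[A.length]? = some c := by
  rw [List.getElem?_append_right le_rfl]
  simp

lemma drop_append_cons (A T : List ℕ) (c : ℕ) (m : ℕ) :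
    (A ++ c :: T).drop (A.length + 1 + m) = T.drop m := by
  rw [← List.singleton_append, ← List.append_assoc]
  have h : (A ++ [c]).length = A.length + 1 := by simp
  calc (A ++ [c] ++ T).drop (A.length + 1 + m)
      = (A ++ [c] ++ T).drop ((A ++ [c]).length + m) := by rw [h]
    _ = T.drop m := List.drop_length_add_append m

section Construction

variable {Vs Vp : Type*} (E : Vs → Vp → Prop) (w : Vs → Vp → ℕ) (e : Bool ⊕ Set Vp → ℕ)

/-- Level-`i` neighborhood of `u : Vs`. -/
def Nse (i : ℕ) (u : Vs) : Set Vp := {p | SubAt E w i u p}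

/-- Level-`i` neighborhood of `p : Vp`. -/
def Msd (i : ℕ) (p : Vp) : Set Vs := {s | SubAt E w i s p}

/-- Biclique id of `p : Vp` at level `i`: the `Vp`-side of its biclique. -/
noncomputable def idp (i : ℕ) (p : Vp) : Set Vp :=
  if h : (Msd E w i p).Nonempty then Nse E w i h.some else ∅

/-- Middle character for source vertices. -/
noncomputable def cS (i : ℕ) (u : Vs) : ℕ :=
  Nat.pair (i - 1)
    (e (if (Nse E w i u).Nonempty then Sum.inr (Nse E w i u) else Sum.inl true))

/-- Middle character for sink vertices. -/
noncomputable def cP (i : ℕ) (p : Vp) : ℕ :=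
  Nat.pair (i - 1)
    (e (if (Msd E w i p).Nonempty then Sum.inr (idp E w i p) else Sum.inl false))

/-- Junk filler, prefix-shaped. -/
noncomputable def junkP (i : ℕ) : List ℕ :=
  (List.range (2 ^ i - 1)).map fun ℓ => Nat.pair (nu (ℓ + 1)) 0

/-- Junk filler, suffix-shaped. -/
noncomputable def junkS (i : ℕ) : List ℕ :=
  (List.range (2 ^ i - 1)).map fun ℓ => Nat.pair (nu (2 ^ i - 1 - ℓ)) 0

/-- The recursive labels: `(SP i).1 u` is the level-`i` suffix label of `u`,
`(SP i).2 p` the level-`i` prefix label of `p`. -/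
noncomputable def SP : ℕ → (Vs → List ℕ) × (Vp → List ℕ)
  | 0 => (fun _ => [], fun _ => [])
  | (i + 1) =>
      (fun u => (if h : (Nse E w (i + 1) u).Nonempty then (SP i).2 h.some else junkP i)
          ++ cS E w e (i + 1) u :: (SP i).1 u,
       fun p => (SP i).2 p
          ++ cP E w e (i + 1) p
            :: (if h : (Msd E w (i + 1) p).Nonempty then (SP i).1 h.some else junkS i))

noncomputable def Sl (i : ℕ) (u : Vs) : List ℕ := (SP E w e i).1 u
noncomputable def Pl (i : ℕ) (p : Vp) : List ℕ := (SP E w e i).2 p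

lemma Sl_succ (i : ℕ) (u : Vs) :
    Sl E w e (i + 1) u =
      (if h : (Nse E w (i + 1) u).Nonempty then Pl E w e i h.some else junkP i)
        ++ cS E w e (i + 1) u :: Sl E w e i u := rfl

lemma Pl_succ (i : ℕ) (p : Vp) :
    Pl E w e (i + 1) p =
      Pl E w e i p ++ cP E w e (i + 1) p
        :: (if h : (Msd E w (i + 1) p).Nonempty then Sl E w e i h.some else junkS i) := rfl

lemma len_junkP (i : ℕ) : (junkP i : List ℕ).length = 2 ^ i - 1 := by simp [junkP]

lemma len_junkS (i : ℕ) : (junkS i : List ℕ).length = 2 ^ i - 1 := by simp [junkS]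

lemma len_SP : ∀ i : ℕ, (∀ u : Vs, (Sl E w e i u).length = 2 ^ i - 1)
    ∧ (∀ p : Vp, (Pl E w e i p).length = 2 ^ i - 1) := by
  intro i
  induction i with
  | zero => exact ⟨fun u => rfl, fun p => rfl⟩
  | succ i ih =>
    have e1 : 2 ^ (i + 1) = 2 ^ i * 2 := pow_succ 2 i
    have e2 : 1 ≤ 2 ^ i := Nat.one_le_two_pow
    constructor
    · intro u
      rw [Sl_succ]
      rw [List.length_append, List.length_cons, ih.1 u]
      split
      · rw [ih.2 _]; omega
      · rw [len_junkP]; omega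
    · intro p
      rw [Pl_succ]
      rw [List.length_append, List.length_cons, ih.2 p]
      split
      · rw [ih.1 _]; omega
      · rw [len_junkS]; omega

lemma len_Sl (i : ℕ) (u : Vs) : (Sl E w e i u).length = 2 ^ i - 1 := (len_SP E w e i).1 u

lemma len_Pl (i : ℕ) (p : Vp) : (Pl E w e i p).length = 2 ^ i - 1 := (len_SP E w e i).2 p

lemma head_len (i : ℕ) (u : Vs) :
    (if h : (Nse E w (i + 1) u).Nonempty then Pl E w e i h.some else junkP i).length
      = 2 ^ i - 1 := by
  split
  · exact len_Pl E w e i _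
  · exact len_junkP i

lemma tail_len (i : ℕ) (p : Vp) :
    (if h : (Msd E w (i + 1) p).Nonempty then Sl E w e i h.some else junkS i).length
      = 2 ^ i - 1 := by
  split
  · exact len_Sl E w e i _
  · exact len_junkS i

lemma drop_Sl {i j : ℕ} (hij : i ≤ j) (u : Vs) :
    (Sl E w e j u).drop (2 ^ j - 2 ^ i) = Sl E w e i u := by
  induction j, hij using Nat.le_induction with
  | base => simp
  | succ j hij ih =>
    have e1 : 2 ^ (j + 1) = 2 ^ j * 2 := pow_succ 2 j
    have e2 : 1 ≤ 2 ^ i := Nat.one_le_two_pow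
    have e3 : 2 ^ i ≤ 2 ^ j := Nat.pow_le_pow_right (by norm_num) hij
    rw [Sl_succ]
    have h2 : 2 ^ (j + 1) - 2 ^ i =
        (if h : (Nse E w (j + 1) u).Nonempty then Pl E w e j h.some else junkP j).length
          + 1 + (2 ^ j - 2 ^ i) := by
      rw [head_len]; omega
    rw [h2, drop_append_cons]
    exact ih

lemma take_Pl {i j : ℕ} (hij : i ≤ j) (p : Vp) :
    (Pl E w e j p).take (2 ^ i - 1) = Pl E w e i p := by
  induction j, hij using Nat.le_induction with
  | base => rw [← len_Pl E w e i p]; exact List.take_length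
  | succ j hij ih =>
    have e3 : 2 ^ i ≤ 2 ^ j := Nat.pow_le_pow_right (by norm_num) hij
    rw [Pl_succ, List.take_append_of_le_length (by rw [len_Pl]; omega)]
    exact ih

lemma Sl_mid (i : ℕ) (u : Vs) :
    (Sl E w e (i + 1) u)[2 ^ i - 1]? = some (cS E w e (i + 1) u) := by
  rw [Sl_succ,
    show ((2:ℕ) ^ i - 1) =
      (if h : (Nse E w (i + 1) u).Nonempty then Pl E w e i h.some else junkP i).length
      from (head_len E w e i u).symm, getElem?_mid]

lemma Pl_mid (i : ℕ) (p : Vp) :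
    (Pl E w e (i + 1) p)[2 ^ i - 1]? = some (cP E w e (i + 1) p) := by
  rw [Pl_succ,
    show ((2:ℕ) ^ i - 1) = (Pl E w e i p).length from (len_Pl E w e i p).symm, getElem?_mid]

lemma tag_junkP {i ℓ : ℕ} (h : ℓ < 2 ^ i - 1) :
    (junkP i : List ℕ)[ℓ]? = some (Nat.pair (nu (ℓ + 1)) 0) := by
  simp [junkP, List.getElem?_map, List.getElem?_range h]

lemma tag_junkS {i ℓ : ℕ} (h : ℓ < 2 ^ i - 1) :
    (junkS i : List ℕ)[ℓ]? = some (Nat.pair (nu (2 ^ i - 1 - ℓ)) 0) := by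
  simp [junkS, List.getElem?_map, List.getElem?_range h]

lemma tag_SP : ∀ i : ℕ,
    (∀ (u : Vs) ℓ, ℓ < 2 ^ i - 1 →
      ∃ x, (Sl E w e i u)[ℓ]? = some (Nat.pair (nu (2 ^ i - 1 - ℓ)) x))
    ∧ (∀ (p : Vp) ℓ, ℓ < 2 ^ i - 1 →
      ∃ x, (Pl E w e i p)[ℓ]? = some (Nat.pair (nu (ℓ + 1)) x)) := by
  intro i
  induction i with
  | zero => exact ⟨fun u ℓ h => by simp at h, fun p ℓ h => by simp at h⟩
  | succ i ih =>
    have e1 : 2 ^ (i + 1) = 2 ^ i * 2 := pow_succ 2 i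
    have e2 : 1 ≤ 2 ^ i := Nat.one_le_two_pow
    constructor
    · intro u ℓ hℓ
      rcases lt_trichotomy ℓ (2 ^ i - 1) with hlt | heq | hgt
      · rw [Sl_succ, List.getElem?_append_left (by rw [head_len]; exact hlt)]
        have harg : 2 ^ (i + 1) - 1 - ℓ = 2 ^ (i + 1) - (ℓ + 1) := by omega
        have hnu : nu (2 ^ (i + 1) - 1 - ℓ) = nu (ℓ + 1) := by
          rw [harg]; exact nu_sub (by omega) (by omega)
        rw [hnu]
        split
        · exact ih.2 _ ℓ hlt
        · exact ⟨0, tag_junkP hlt⟩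
      · subst heq
        rw [Sl_mid]
        have harg : 2 ^ (i + 1) - 1 - (2 ^ i - 1) = 2 ^ i := by omega
        rw [harg, nu_two_pow]
        exact ⟨_, rfl⟩
      · rw [Sl_succ, List.getElem?_append_right (by rw [head_len]; omega)]
        rw [head_len]
        have hidx : ℓ - (2 ^ i - 1) = (ℓ - 2 ^ i) + 1 := by omega
        rw [hidx, List.getElem?_cons_succ]
        obtain ⟨x, hx⟩ := ih.1 u (ℓ - 2 ^ i) (by omega)
        refine ⟨x, ?_⟩
        rw [hx]
        have harg : 2 ^ i - 1 - (ℓ - 2 ^ i) = 2 ^ (i + 1) - 1 - ℓ := by omega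
        rw [harg]
    · intro p ℓ hℓ
      rcases lt_trichotomy ℓ (2 ^ i - 1) with hlt | heq | hgt
      · rw [Pl_succ, List.getElem?_append_left (by rw [len_Pl]; exact hlt)]
        exact ih.2 p ℓ hlt
      · subst heq
        rw [Pl_mid]
        have harg : 2 ^ i - 1 + 1 = 2 ^ i := by omega
        rw [harg, nu_two_pow]
        exact ⟨_, rfl⟩
      · rw [Pl_succ, List.getElem?_append_right (by rw [len_Pl]; omega)]
        rw [len_Pl]
        have hidx : ℓ - (2 ^ i - 1) = (ℓ - 2 ^ i) + 1 := by omega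
        rw [hidx, List.getElem?_cons_succ]
        have hnu : nu (2 ^ i - 1 - (ℓ - 2 ^ i)) = nu (ℓ + 1) := by
          have harg : 2 ^ i - 1 - (ℓ - 2 ^ i) = 2 ^ (i + 1) - (ℓ + 1) := by omega
          rw [harg]
          exact nu_sub (by omega) (by omega)
        split
        · obtain ⟨x, hx⟩ := ih.1 _ (ℓ - 2 ^ i) (by omega)
          exact ⟨x, by rw [hx, hnu]⟩
        · exact ⟨0, by rw [tag_junkS (by omega), hnu]⟩

lemma idp_congr {i : ℕ} {p p' : Vp} (h : Msd E w i p = Msd E w i p') :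
    idp E w i p = idp E w i p' := by
  unfold idp
  simp only [h]

lemma cP_congr {i : ℕ} {p p' : Vp} (h : Msd E w i p = Msd E w i p') :
    cP E w e i p = cP E w e i p' := by
  unfold cP
  rw [idp_congr E w h]
  simp only [h]

lemma const_P : ∀ i : ℕ, ∀ p p' : Vp,
    (∀ j, 1 ≤ j → j ≤ i → Msd E w j p = Msd E w j p') → Pl E w e i p = Pl E w e i p' := by
  intro i
  induction i with
  | zero => intro p p' _; rfl
  | succ i ih =>
    intro p p' h
    have h1 : Msd E w (i + 1) p = Msd E w (i + 1) p' := h (i + 1) (by omega) le_rfl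
    rw [Pl_succ, Pl_succ, ih p p' fun j hj hji => h j hj (by omega),
      cP_congr E w e h1]
    simp only [h1]

lemma nse_congr {i : ℕ} {u u' : Vs} (h : Nse E w i u = Nse E w i u') :
    cS E w e i u = cS E w e i u' := by
  unfold cS
  simp only [h]

lemma const_S : ∀ i : ℕ, ∀ u u' : Vs,
    (∀ j, 1 ≤ j → j ≤ i → Nse E w j u = Nse E w j u') → Sl E w e i u = Sl E w e i u' := by
  intro i
  induction i with
  | zero => intro u u' _; rfl
  | succ i ih =>
    intro u u' h
    have h1 : Nse E w (i + 1) u = Nse E w (i + 1) u' := h (i + 1) (by omega) le_rfl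
    rw [Sl_succ, Sl_succ, ih u u' fun j hj hji => h j hj (by omega),
      nse_congr E w e h1]
    simp only [h1]

lemma nse_eq_of_common {i : ℕ} (hbc : BicliqueUnion (SubAt E w i)) {u u' : Vs} {p : Vp}
    (h : SubAt E w i u p) (h' : SubAt E w i u' p) : Nse E w i u = Nse E w i u' := by
  ext q
  exact ⟨fun hq => hbc u' u p q h' h hq, fun hq => hbc u u' p q h h' hq⟩

lemma msd_eq_of_common {i : ℕ} (hbc : BicliqueUnion (SubAt E w i)) {u : Vs} {p p' : Vp}
    (h : SubAt E w i u p) (h' : SubAt E w i u p') : Msd E w i p = Msd E w i p' := by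
  ext s
  exact ⟨fun hs => hbc s u p p' hs h h', fun hs => hbc s u p' p hs h' h⟩

lemma adj_iff_mid (he : Function.Injective e) {i : ℕ} (hbc : BicliqueUnion (SubAt E w i))
    (u : Vs) (p : Vp) : cS E w e i u = cP E w e i p ↔ SubAt E w i u p := by
  unfold cS cP
  rw [Nat.pair_eq_pair]
  constructor
  · rintro ⟨-, h2⟩
    have h3 := he h2
    split_ifs at h3 with hN hM hM
    · have heq : Nse E w i u = idp E w i p := Sum.inr.inj h3
      unfold idp at heq
      rw [dif_pos hM] at heq
      have hmem : hM.some ∈ Msd E w i p := hM.some_mem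
      have hpin : p ∈ Nse E w i hM.some := hmem
      rw [← heq] at hpin
      exact hpin
    all_goals exact absurd h3 (by simp)
  · intro hup
    have hN : (Nse E w i u).Nonempty := ⟨p, hup⟩
    have hM : (Msd E w i p).Nonempty := ⟨u, hup⟩
    refine ⟨rfl, ?_⟩
    rw [if_pos hN, if_pos hM]
    congr 2
    unfold idp
    rw [dif_pos hM]
    exact nse_eq_of_common E w hbc hup hM.some_mem

lemma main_fwd (he : Function.Injective e) (hhub : SatisfiesHUBRule E w) :
    ∀ i (u : Vs) (p : Vp), 1 ≤ i → SubAt E w i u p → Sl E w e i u = Pl E w e i p := by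
  intro i u p hi hup
  obtain ⟨i, rfl⟩ : ∃ j, i = j + 1 := ⟨i - 1, by omega⟩
  have hbc := hhub.1 (i + 1) (by omega)
  have hN : (Nse E w (i + 1) u).Nonempty := ⟨p, hup⟩
  have hM : (Msd E w (i + 1) p).Nonempty := ⟨u, hup⟩
  rw [Sl_succ, Pl_succ, dif_pos hN, dif_pos hM]
  have hp0 : SubAt E w (i + 1) u hN.some := hN.some_mem
  have hu0 : SubAt E w (i + 1) hM.some p := hM.some_mem
  have hPeq : Pl E w e i hN.some = Pl E w e i p := by
    apply const_P
    intro j hj hji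
    by_cases hpp : hN.some = p
    · rw [hpp]
    · have hMeq : Msd E w (i + 1) hN.some = Msd E w (i + 1) p :=
        msd_eq_of_common E w hbc hp0 hup
      have h2 : 2 ≤ i + 1 := by omega
      have htw := hhub.2.2 (i + 1) h2 hN.some p hpp ⟨u, hp0⟩
        (fun s => Set.ext_iff.mp hMeq s) j hj (by omega)
      ext s
      exact htw s
  have hSeq : Sl E w e i hM.some = Sl E w e i u := by
    apply const_S
    intro j hj hji
    by_cases huu : hM.some = u
    · rw [huu]
    · have hNeq : Nse E w (i + 1) hM.some = Nse E w (i + 1) u :=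
        nse_eq_of_common E w hbc hu0 hup
      have h2 : 2 ≤ i + 1 := by omega
      have htw := hhub.2.1 (i + 1) h2 hM.some u huu ⟨p, hu0⟩
        (fun q => Set.ext_iff.mp hNeq q) j hj (by omega)
      ext q
      exact htw q
  rw [hPeq, hSeq, (adj_iff_mid E w e he hbc u p).mpr hup]

lemma main_bwd (he : Function.Injective e) (hhub : SatisfiesHUBRule E w)
    {i : ℕ} {u : Vs} {p : Vp} (hi : 1 ≤ i) (h : Sl E w e i u = Pl E w e i p) :
    SubAt E w i u p := by
  obtain ⟨i, rfl⟩ : ∃ j, i = j + 1 := ⟨i - 1, by omega⟩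
  have hbc := hhub.1 (i + 1) (by omega)
  have hmid := congrArg (fun l => l[2 ^ i - 1]?) h
  simp only [Sl_mid, Pl_mid] at hmid
  exact (adj_iff_mid E w e he hbc u p).mp (Option.some.inj hmid)

lemma exists_labeling (k : ℕ) (hdec : IsDecomposition E k w) (hhub : SatisfiesHUBRule E w)
    (he : Function.Injective e) :
    IsOverlapLabeling E (2 ^ k - 1) (Sl E w e k) (Pl E w e k) := by
  have e2k : 1 ≤ 2 ^ k := Nat.one_le_two_pow
  refine ⟨len_Sl E w e k, len_Pl E w e k, fun u p => ?_⟩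
  constructor
  · intro hup
    obtain ⟨h1, h2⟩ := hdec u p hup
    set i := w u p with hwi
    have hi2 : 2 ^ 1 ≤ 2 ^ i := Nat.pow_le_pow_right (by norm_num) h1
    have hik : 2 ^ i ≤ 2 ^ k := Nat.pow_le_pow_right (by norm_num) h2
    refine ⟨2 ^ i - 1, by omega, ?_, ?_⟩
    · rw [len_Sl, len_Pl]
      simp only [min_self]
      omega
    · rw [len_Sl]
      have harg : 2 ^ k - 1 - (2 ^ i - 1) = 2 ^ k - 2 ^ i := by omega
      rw [harg, drop_Sl E w e h2, take_Pl E w e h2]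
      exact main_fwd E w e he hhub i u p h1 ⟨hup, rfl⟩
  · rintro ⟨j, hj1, hj2, hjd⟩
    rw [len_Sl, len_Pl, min_self] at hj2
    rw [len_Sl] at hjd
    have hpal : ∀ s, 1 ≤ s → s ≤ j → nu s = nu (j + 1 - s) := by
      intro s hs1 hsj
      have hcongr := congrArg (fun l => l[j - s]?) hjd
      simp only [List.getElem?_drop, List.getElem?_take] at hcongr
      rw [if_pos (by omega)] at hcongr
      obtain ⟨x, hx⟩ := (tag_SP E w e k).1 u (2 ^ k - 1 - j + (j - s)) (by omega)
      obtain ⟨y, hy⟩ := (tag_SP E w e k).2 p (j - s) (by omega)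
      rw [hx, hy] at hcongr
      have hfst := (Nat.pair_eq_pair.mp (Option.some.inj hcongr)).1
      have harg1 : 2 ^ k - 1 - (2 ^ k - 1 - j + (j - s)) = s := by omega
      have harg2 : j - s + 1 = j + 1 - s := by omega
      rw [harg1, harg2] at hfst
      exact hfst
    obtain ⟨i, hi1, hieq⟩ := nu_palindrome hj1 hpal
    have e2i : 1 ≤ 2 ^ i := Nat.one_le_two_pow
    have hik : i ≤ k := by
      have h2i : 2 ^ i ≤ 2 ^ k := by omega
      exact (Nat.pow_le_pow_iff_right (by norm_num)).mp h2i
    subst hieq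
    rw [show 2 ^ k - 1 - (2 ^ i - 1) = 2 ^ k - 2 ^ i from by omega,
      drop_Sl E w e hik, take_Pl E w e hik] at hjd
    exact (main_bwd E w e he hhub hi1 hjd).1

end Construction

section Part1

variable {Vs Vp : Type*} {E : Vs → Vp → Prop} {r : ℕ} {ls : Vs → List ℕ} {lp : Vp → List ℕ}

lemma hub_le (hlab : IsOverlapLabeling E r ls lp) :
    ∃ W, IsDecomposition E r W ∧ SatisfiesHUBRule E W := by
  obtain ⟨hlen_s, hlen_p, hiff⟩ := hlab
  set W : Vs → Vp → ℕ := fun u v => ov (ls u) (lp v) with hW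
  have hov : ∀ u p, E u p → OverlapsBy (ls u) (lp p) (W u p) := by
    intro u p h
    exact Nat.sInf_mem ((hiff u p).mp h)
  have hsub : ∀ i u p, SubAt E W i u p → OverlapsBy (ls u) (lp p) i := by
    rintro i u p ⟨hE, hw⟩
    have := hov u p hE; rwa [hw] at this
  have hovle : ∀ u p i, OverlapsBy (ls u) (lp p) i → E u p ∧ W u p ≤ i := by
    intro u p i h
    exact ⟨(hiff u p).mpr ⟨i, h⟩, Nat.sInf_le h⟩
  have hsfx : ∀ u p i, OverlapsBy (ls u) (lp p) i →
      (ls u).drop (r - i) = (lp p).take i ∧ 1 ≤ i ∧ i ≤ r := by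
    rintro u p i ⟨h1, h2, h3⟩
    rw [hlen_s u] at h3
    rw [hlen_s u, hlen_p p, min_self] at h2
    exact ⟨h3, h1, h2⟩
  have hmk : ∀ u p i, 1 ≤ i → i ≤ r → (ls u).drop (r - i) = (lp p).take i →
      OverlapsBy (ls u) (lp p) i := by
    intro u p i h1 h2 h3
    refine ⟨h1, ?_, ?_⟩
    · rw [hlen_s u, hlen_p p, min_self]; exact h2
    · rw [hlen_s u]; exact h3
  have hdrop : ∀ (u v : Vs) (i : ℕ), i ≤ r →
      (ls u).drop (r - i) = (ls v).drop (r - i) →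
      ∀ m ≤ i, (ls u).drop (r - m) = (ls v).drop (r - m) := by
    intro u v i hir h m hmi
    calc (ls u).drop (r - m) = ((ls u).drop (r - i)).drop (i - m) := by
          rw [List.drop_drop]; congr 1; omega
      _ = ((ls v).drop (r - i)).drop (i - m) := by rw [h]
      _ = (ls v).drop (r - m) := by rw [List.drop_drop]; congr 1; omega
  have htake : ∀ (p q : Vp) (i : ℕ), (lp p).take i = (lp q).take i →
      ∀ m ≤ i, (lp p).take m = (lp q).take m := by
    intro p q i h m hmi
    have := congrArg (List.take m) h
    rwa [List.take_take, List.take_take, min_eq_left hmi] at this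
  refine ⟨W, ?_, ?_, ?_, ?_⟩
  · intro u v hE
    obtain ⟨-, h1, h2⟩ := hsfx u v _ (hov u v hE)
    exact ⟨h1, h2⟩
  · -- biclique union at each level
    intro i hi s1 s2 p1 p2 h11 h21 h22
    obtain ⟨e11, -, hir⟩ := hsfx _ _ _ (hsub i s1 p1 h11)
    obtain ⟨e21, -, -⟩ := hsfx _ _ _ (hsub i s2 p1 h21)
    obtain ⟨e22, -, -⟩ := hsfx _ _ _ (hsub i s2 p2 h22)
    have hxx : (ls s1).drop (r - i) = (ls s2).drop (r - i) := by rw [e11, e21]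
    have ho12 : OverlapsBy (ls s1) (lp p2) i := hmk _ _ _ (by omega) hir (by rw [hxx, e22])
    obtain ⟨hE12, hle12⟩ := hovle s1 p2 i ho12
    refine ⟨hE12, ?_⟩
    rcases Nat.lt_or_ge (W s1 p2) i with hlt | hge
    · exfalso
      obtain ⟨em, hm1, hmr⟩ := hsfx _ _ _ (hov s1 p2 hE12)
      have hx : (ls s1).drop (r - W s1 p2) = (ls s2).drop (r - W s1 p2) :=
        hdrop s1 s2 i hir hxx _ hlt.le
      have ho : OverlapsBy (ls s2) (lp p2) (W s1 p2) := hmk _ _ _ hm1 hmr (by rw [← hx, em])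
      have := (hovle s2 p2 _ ho).2
      have := h22.2
      omega
    · omega
  · -- Vs-side twins
    rintro i hi u v huv ⟨p0, hup0⟩ hsame j hj hji
    have hvp0 : SubAt E W i v p0 := (hsame p0).mp hup0
    obtain ⟨eu, -, hir⟩ := hsfx _ _ _ (hsub i u p0 hup0)
    obtain ⟨ev, -, -⟩ := hsfx _ _ _ (hsub i v p0 hvp0)
    have hsfxeq : (ls u).drop (r - i) = (ls v).drop (r - i) := by rw [eu, ev]
    have dir : ∀ (a b : Vs), (ls a).drop (r - i) = (ls b).drop (r - i) →
        ∀ p, SubAt E W j a p → SubAt E W j b p := by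
      rintro a b hab p hap
      obtain ⟨ea, -, hjr⟩ := hsfx _ _ _ (hsub j a p hap)
      have hxb : (ls a).drop (r - j) = (ls b).drop (r - j) := hdrop a b i hir hab j (by omega)
      have hob : OverlapsBy (ls b) (lp p) j := hmk _ _ _ hj hjr (by rw [← hxb, ea])
      obtain ⟨hEb, hleb⟩ := hovle b p j hob
      refine ⟨hEb, ?_⟩
      rcases Nat.lt_or_ge (W b p) j with hlt | hge
      · exfalso
        obtain ⟨eb, hb1, hbr⟩ := hsfx _ _ _ (hov b p hEb)
        have hxa : (ls a).drop (r - W b p) = (ls b).drop (r - W b p) :=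
          hdrop a b i hir hab _ (by omega)
        have hoa : OverlapsBy (ls a) (lp p) (W b p) := hmk _ _ _ hb1 hbr (by rw [hxa, eb])
        have := (hovle a p _ hoa).2
        have := hap.2
        omega
      · have := hap.2
        omega
    intro p
    exact ⟨dir u v hsfxeq p, dir v u hsfxeq.symm p⟩
  · -- Vp-side twins
    rintro i hi p q hpq ⟨s0, hsp0⟩ hsame j hj hji
    have hsq0 : SubAt E W i s0 q := (hsame s0).mp hsp0
    obtain ⟨ep, -, hir⟩ := hsfx _ _ _ (hsub i s0 p hsp0)
    obtain ⟨eq0, -, -⟩ := hsfx _ _ _ (hsub i s0 q hsq0)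
    have hpfxeq : (lp p).take i = (lp q).take i := by rw [← ep, eq0]
    have dir : ∀ (a b : Vp), (lp a).take i = (lp b).take i →
        ∀ s, SubAt E W j s a → SubAt E W j s b := by
      rintro a b hab s hsa
      obtain ⟨ea, -, hjr⟩ := hsfx _ _ _ (hsub j s a hsa)
      have hxb : (lp a).take j = (lp b).take j := htake a b i hab j (by omega)
      have hob : OverlapsBy (ls s) (lp b) j := hmk _ _ _ hj hjr (by rw [ea, hxb])
      obtain ⟨hEb, hleb⟩ := hovle s b j hob
      refine ⟨hEb, ?_⟩
      rcases Nat.lt_or_ge (W s b) j with hlt | hge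
      · exfalso
        obtain ⟨eb, hb1, hbr⟩ := hsfx _ _ _ (hov s b hEb)
        have hxa : (lp a).take (W s b) = (lp b).take (W s b) :=
          htake a b i hab _ (by omega)
        have hoa : OverlapsBy (ls s) (lp a) (W s b) := hmk _ _ _ hb1 hbr (by rw [eb, ← hxa])
        have := (hovle s a _ hoa).2
        have := hsa.2
        omega
      · have := hsa.2
        omega
    intro s
    exact ⟨dir p q hpfxeq s, dir q p hpfxeq.symm s⟩

end Part1

end HubAux

/-- For every (finite) bipartite graph `G`, `hub(G) ≤ r(G) ≤ 2^{hub(G)} − 1`. -/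
theorem statement9 {Vs Vp : Type*} [Fintype Vs] [Fintype Vp] (E : Vs → Vp → Prop) :
    hubNumber E ≤ bReadability E ∧ bReadability E ≤ 2 ^ hubNumber E - 1 := by
  classical
  -- the HUB set is nonempty: give each edge its own weight
  obtain ⟨f, hf⟩ := exists_injective_nat (Vs × Vp)
  have hmem0 : {k | ∃ w, IsDecomposition E k w ∧ SatisfiesHUBRule E w}.Nonempty := by
    refine ⟨(Finset.univ : Finset (Vs × Vp)).sup (fun q => f q + 1),
      fun u v => f (u, v) + 1, ?_, ?_, ?_, ?_⟩
    · intro u v _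
      refine ⟨Nat.le_add_left 1 _, ?_⟩
      show f (u, v) + 1 ≤ _
      exact Finset.le_sup (f := fun q => f q + 1) (Finset.mem_univ (u, v))
    · intro i _ s1 s2 p1 p2 h11 h21 h22
      have h1 : f (s1, p1) + 1 = i := h11.2
      have h2 : f (s2, p1) + 1 = i := h21.2
      have h3 : f (s2, p2) + 1 = i := h22.2
      have hp : p1 = p2 := congrArg Prod.snd (hf (show f (s2, p1) = f (s2, p2) by omega))
      rw [hp] at h11
      exact h11
    · rintro i _ u v huv ⟨p, hp⟩ hsame j _ _ q
      exfalso
      have hq := (hsame p).mp hp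
      have h1 : f (u, p) + 1 = i := hp.2
      have h2 : f (v, p) + 1 = i := hq.2
      exact huv (congrArg Prod.fst (hf (show f (u, p) = f (v, p) by omega)))
    · rintro i _ p q hpq ⟨s, hs⟩ hsame j _ _ t
      exfalso
      have hq := (hsame s).mp hs
      have h1 : f (s, p) + 1 = i := hs.2
      have h2 : f (s, q) + 1 = i := hq.2
      exact hpq (congrArg Prod.snd (hf (show f (s, p) = f (s, q) by omega)))
  have hubmem : ∃ w, IsDecomposition E (hubNumber E) w ∧ SatisfiesHUBRule E w :=
    Nat.sInf_mem hmem0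
  obtain ⟨w, hdec, hhub⟩ := hubmem
  obtain ⟨e, he⟩ := exists_injective_nat (Bool ⊕ Set Vp)
  have hlab := HubAux.exists_labeling E w e (hubNumber E) hdec hhub he
  have hle2 : bReadability E ≤ 2 ^ hubNumber E - 1 := Nat.sInf_le ⟨_, _, hlab⟩
  have hrmem : ∃ (ls : Vs → List ℕ) (lp : Vp → List ℕ),
      IsOverlapLabeling E (bReadability E) ls lp :=
    Nat.sInf_mem (⟨_, _, _, hlab⟩ :
      {r | ∃ (ls : Vs → List ℕ) (lp : Vp → List ℕ), IsOverlapLabeling E r ls lp}.Nonempty)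
  obtain ⟨ls, lp, hl⟩ := hrmem
  obtain ⟨W, hWd, hWh⟩ := HubAux.hub_le hl
  exact ⟨Nat.sInf_le ⟨W, hWd, hWh⟩, hle2⟩

end Readability
end

section
/- Let G = (V_s, V_p, E) be a bipartite graph and let w : E → {1,…,k} be a decomposition of size k satisfying the HUB-rule. Then G has an overlap labeling of length 2^k − 1; in particular r(G) ≤ 2^k − 1. -/
namespace Readability

def ord2 : ℕ → ℕ
  | 0 => 0
  | (n+1) => if (n+1) % 2 = 0 then ord2 ((n+1)/2) + 1 else 0
  decreasing_by exact Nat.div_lt_self (Nat.succ_pos n) (by norm_num)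

lemma ord2_odd (n : ℕ) (h : n % 2 = 1) : ord2 n = 0 := by
  cases n with
  | zero => simp at h
  | succ m => rw [ord2]; simp [h]

lemma ord2_even (n : ℕ) (h : n % 2 = 0) (h0 : n ≠ 0) : ord2 n = ord2 (n/2) + 1 := by
  cases n with
  | zero => simp at h0
  | succ m => rw [ord2]; simp [h]

lemma ord2_two_mul (n : ℕ) (h : n ≠ 0) : ord2 (2*n) = ord2 n + 1 := by
  rw [ord2_even (2*n) (by omega) (by omega), Nat.mul_div_cancel_left n (by norm_num)]

lemma ord2_two_pow (t : ℕ) : ord2 (2^t) = t := by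
  induction t with
  | zero => rw [pow_zero]; exact ord2_odd 1 (by norm_num)
  | succ s ih => rw [pow_succ, mul_comm, ord2_two_mul _ (by positivity), ih]

lemma ord2_decomp (n : ℕ) (h : n ≠ 0) : ∃ q, q % 2 = 1 ∧ n = 2^(ord2 n) * q := by
  induction n using Nat.strong_induction_on with
  | _ n ih =>
    rcases Nat.even_or_odd n with he | ho
    · obtain ⟨m, rfl⟩ := he
      have hm : m ≠ 0 := by omega
      obtain ⟨q, hq, hqe⟩ := ih m (by omega) hm
      refine ⟨q, hq, ?_⟩
      have h2 : ord2 (m+m) = ord2 m + 1 := by rw [← two_mul, ord2_two_mul m hm]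
      rw [h2, pow_succ]
      conv_lhs => rw [hqe]
      ring
    · exact ⟨n, Nat.odd_iff.mp ho, by simp [ord2_odd n (Nat.odd_iff.mp ho)]⟩

lemma le_ord2_of_pow_dvd (a n : ℕ) (h0 : n ≠ 0) (h : 2^a ∣ n) : a ≤ ord2 n := by
  induction a generalizing n with
  | zero => omega
  | succ b ih =>
    obtain ⟨m, rfl⟩ := h
    have e : 2^(b+1) * m = 2 * (2^b * m) := by ring
    have hbm : 2^b * m ≠ 0 := by
      intro hz; rw [e, hz] at h0; simp at h0
    rw [e, ord2_two_mul _ hbm]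
    have := ih (2^b*m) hbm ⟨m, rfl⟩
    omega

lemma ord2_pow_mul_add (t m r : ℕ) (h1 : 1 ≤ r) (h2 : r < 2^t) :
    ord2 (2^t * m + r) = ord2 r := by
  induction t generalizing r with
  | zero => simp at h2; omega
  | succ s ih =>
    rcases Nat.even_or_odd r with he | ho
    · obtain ⟨r', rfl⟩ := he
      have h1' : 1 ≤ r' := by omega
      have h2' : r' < 2^s := by rw [pow_succ] at h2; omega
      have e : 2^(s+1) * m + (r' + r') = 2 * (2^s * m + r') := by ring
      have e2 : r' + r' = 2 * r' := by ring
      rw [e, e2, ord2_two_mul _ (by positivity), ord2_two_mul _ (by omega), ih r' h1' h2']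
    · have hr := Nat.odd_iff.mp ho
      have e : 2^(s+1)*m + r = 2*(2^s*m) + r := by ring
      have hmod : (2*(2^s*m) + r) % 2 = 1 := by omega
      rw [e, ord2_odd _ hmod, ord2_odd _ hr]

lemma overlap_len (k j m : ℕ) (hj : 1 ≤ j) (hm : m + j = 2^k - 1)
    (H : ∀ r, 1 ≤ r → r ≤ j → ord2 (m + r) = ord2 r) :
    ∃ i, 1 ≤ i ∧ i ≤ k ∧ j = 2^i - 1 := by
  obtain ⟨q, hq, hqe⟩ := ord2_decomp (j+1) (by omega)
  set s := ord2 (j+1) with hs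
  have hk1 : (1:ℕ) ≤ 2^k := Nat.one_le_two_pow
  have hs1 : (1:ℕ) ≤ 2^s := Nat.one_le_two_pow
  rcases eq_or_lt_of_le (show 1 ≤ q by omega) with hq1 | hq3
  · subst hq1
    rw [mul_one] at hqe
    refine ⟨s, ?_, ?_, by omega⟩
    · rcases Nat.eq_zero_or_pos s with hz | h
      · rw [hz, pow_zero] at hqe; omega
      · exact h
    · have h2 : 2^s ≤ 2^k := by omega
      exact (Nat.pow_le_pow_iff_right (by norm_num)).mp h2
  · exfalso
    have hq3' : 3 ≤ q := by omega
    have h3 : 2^s * 3 ≤ 2^s * q := Nat.mul_le_mul_left _ hq3'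
    have hrle : 2^s ≤ j := by omega
    have hH := H (2^s) hs1 hrle
    rw [ord2_two_pow] at hH
    have hmulsub : 2^s*(q-1) + 2^s = 2^s * q := by
      rw [← Nat.mul_succ]; congr 1; omega
    have hsum : m + 2^s + 2^s * (q-1) = 2^k := by omega
    have hsk : s + 1 ≤ k := by
      have e : 2^(s+1) = 2^s * 2 := by rw [pow_succ]
      have h2 : 2^s * 2 ≤ 2^s * q := Nat.mul_le_mul_left _ (by omega)
      have h4 : 2^(s+1) ≤ 2^k := by omega
      exact (Nat.pow_le_pow_iff_right (by norm_num)).mp h4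
    have hdvd : 2^(s+1) ∣ (m + 2^s) := by
      have d1 : 2^(s+1) ∣ 2^k := pow_dvd_pow 2 hsk
      have d2 : 2^(s+1) ∣ 2^s * (q-1) := by
        obtain ⟨c, hc⟩ : 2 ∣ (q - 1) := by omega
        exact ⟨c, by rw [hc, pow_succ]; ring⟩
      have e : m + 2^s = 2^k - 2^s*(q-1) := by omega
      rw [e]
      exact Nat.dvd_sub d1 d2
    have := le_ord2_of_pow_dvd (s+1) (m + 2^s) (by positivity) hdvd
    omega


section Construction

attribute [local instance] Classical.propDecidable

variable {Vs Vp : Type*} (E : Vs → Vp → Prop) (w : Vs → Vp → ℕ)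

abbrev Sym (Vp : Type*) := ℕ × (ℕ ⊕ Set Vp)

def NbrS (i : ℕ) (u : Vs) : Set Vp := {p | SubAt E w i u p}
def NbrP (i : ℕ) (v : Vp) : Set Vs := {s | SubAt E w i s v}
def Pid (i : ℕ) (v : Vp) : Set Vp := {p | ∃ s, s ∈ NbrP E w i v ∧ p ∈ NbrS E w i s}

noncomputable def midS (i : ℕ) (u : Vs) : Sym Vp :=
  (i, if (NbrS E w i u).Nonempty then Sum.inr (NbrS E w i u) else Sum.inl 1)

noncomputable def midP (i : ℕ) (v : Vp) : Sym Vp :=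
  (i, if (NbrP E w i v).Nonempty then Sum.inr (Pid E w i v) else Sum.inl 2)

noncomputable def pick {X : Type*} (f : X → List (Sym Vp)) (s : Set X)
    (d : List (Sym Vp)) : List (Sym Vp) :=
  if h : s.Nonempty then f h.some else d

def J (Vp : Type*) : ℕ → List (Sym Vp)
  | 0 => []
  | (i+1) => J Vp i ++ ((i+1 : ℕ), Sum.inl 0) :: J Vp i

noncomputable def SP : ℕ → (Vs → List (Sym Vp)) × (Vp → List (Sym Vp))
  | 0 => (fun _ => [], fun _ => [])
  | (i+1) =>
      (fun u => pick (SP i).2 (NbrS E w (i+1) u) (J Vp i)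
          ++ midS E w (i+1) u :: (SP i).1 u,
       fun v => (SP i).2 v
          ++ midP E w (i+1) v :: pick (SP i).1 (NbrP E w (i+1) v) (J Vp i))

lemma J_length : ∀ i, (J Vp i).length = 2^i - 1
  | 0 => rfl
  | (i+1) => by
    have h1 : (1:ℕ) ≤ 2^i := Nat.one_le_two_pow
    simp [J, J_length i, pow_succ]; omega

lemma SP_length : ∀ i, (∀ u, ((SP E w i).1 u).length = 2^i - 1) ∧
    (∀ v, ((SP E w i).2 v).length = 2^i - 1)
  | 0 => ⟨fun _ => rfl, fun _ => rfl⟩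
  | (i+1) => by
    have h1 : (1:ℕ) ≤ 2^i := Nat.one_le_two_pow
    have IH := SP_length i
    constructor
    · intro u
      show (pick (SP E w i).2 (NbrS E w (i+1) u) (J Vp i)
          ++ midS E w (i+1) u :: (SP E w i).1 u).length = 2^(i+1) - 1
      have hp : (pick (SP E w i).2 (NbrS E w (i+1) u) (J Vp i)).length = 2^i - 1 := by
        unfold pick; split
        · exact IH.2 _
        · exact J_length i
      rw [List.length_append, List.length_cons, IH.1 u, hp]
      rw [pow_succ]; omega
    · intro v
      show ((SP E w i).2 v
          ++ midP E w (i+1) v :: pick (SP E w i).1 (NbrP E w (i+1) v) (J Vp i)).length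
          = 2^(i+1) - 1
      have hp : (pick (SP E w i).1 (NbrP E w (i+1) v) (J Vp i)).length = 2^i - 1 := by
        unfold pick; split
        · exact IH.1 _
        · exact J_length i
      rw [List.length_append, List.length_cons, IH.2 v, hp]
      rw [pow_succ]; omega

lemma S_suffix (u : Vs) : ∀ {i j}, i ≤ j → (SP E w i).1 u <:+ (SP E w j).1 u := by
  intro i j h
  induction j with
  | zero => rw [Nat.le_zero.mp h]
  | succ m ih =>
    rcases Nat.lt_or_ge i (m+1) with hlt | hge
    · refine (ih (by omega)).trans ?_
      exact ⟨pick (SP E w m).2 (NbrS E w (m+1) u) (J Vp m) ++ [midS E w (m+1) u], by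
        show _ = (SP E w (m+1)).1 u
        simp [SP]⟩
    · rw [Nat.le_antisymm h hge]

lemma P_prefix (v : Vp) : ∀ {i j}, i ≤ j → (SP E w i).2 v <+: (SP E w j).2 v := by
  intro i j h
  induction j with
  | zero => rw [Nat.le_zero.mp h]
  | succ m ih =>
    rcases Nat.lt_or_ge i (m+1) with hlt | hge
    · refine (ih (by omega)).trans ?_
      exact ⟨midP E w (m+1) v :: pick (SP E w m).1 (NbrP E w (m+1) v) (J Vp m), by
        show _ = (SP E w (m+1)).2 v
        simp [SP]⟩
    · rw [Nat.le_antisymm h hge]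

def TagOK (l : List (Sym Vp)) : Prop :=
  ∀ p (h : p < l.length), (l[p]'h).1 = ord2 (p+1) + 1

lemma tag_glue {t : ℕ} {a b : List (Sym Vp)} (x : ℕ ⊕ Set Vp)
    (ha : TagOK a) (hb : TagOK b) (hla : a.length = 2^t - 1) (hlb : b.length = 2^t - 1) :
    TagOK (a ++ ((t+1 : ℕ), x) :: b) := by
  intro p h
  have h1 : (1:ℕ) ≤ 2^t := Nat.one_le_two_pow
  have hlen : (a ++ ((t+1:ℕ),x) :: b).length = 2^t - 1 + (2^t - 1 + 1) := by
    simp [hla, hlb]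
  rw [hlen] at h
  rcases Nat.lt_trichotomy p a.length with hp | hp | hp
  · rw [List.getElem_append_left hp]
    exact ha p hp
  · have e : p - a.length = 0 := by omega
    rw [List.getElem_append_right (by omega)]
    have : (((t+1:ℕ),x) :: b)[p - a.length]'(by simp; omega) = ((t+1:ℕ),x) := by
      simp [e]
    rw [this]
    have : p + 1 = 2^t := by omega
    rw [this, ord2_two_pow]
  · have hq : p - a.length = (p - a.length - 1) + 1 := by omega
    set q := p - a.length - 1 with hqd
    have hqb : q < b.length := by omega
    rw [List.getElem_append_right (by omega)]
    have e2 : (((t+1:ℕ),x) :: b)[p - a.length]'(by simp; omega) = b[q]'hqb := by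
      rw [List.getElem_of_eq (rfl : ((t+1:ℕ),x) :: b = ((t+1:ℕ),x) :: b)]
      simp only [hq]
      exact List.getElem_cons_succ ..
    rw [e2, hb q hqb]
    have e3 : p + 1 = 2^t * 1 + (q + 1) := by omega
    rw [e3, ord2_pow_mul_add t 1 (q+1) (by omega) (by omega)]

lemma J_tag : ∀ i, TagOK (J Vp i)
  | 0 => fun p h => by simp [J] at h
  | (i+1) => tag_glue _ (J_tag i) (J_tag i) (J_length i) (J_length i)

lemma SP_tag : ∀ i, (∀ u, TagOK ((SP E w i).1 u)) ∧ (∀ v, TagOK ((SP E w i).2 v))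
  | 0 => ⟨fun _ p h => by simp [SP] at h, fun _ p h => by simp [SP] at h⟩
  | (i+1) => by
    have IH := SP_tag i
    constructor
    · intro u
      show TagOK (pick (SP E w i).2 (NbrS E w (i+1) u) (J Vp i)
          ++ midS E w (i+1) u :: (SP E w i).1 u)
      have hp : TagOK (pick (SP E w i).2 (NbrS E w (i+1) u) (J Vp i)) := by
        unfold pick; split
        · exact IH.2 _
        · exact J_tag i
      have hpl : (pick (SP E w i).2 (NbrS E w (i+1) u) (J Vp i)).length = 2^i - 1 := by
        unfold pick; split
        · exact (SP_length E w i).2 _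
        · exact J_length i
      have : midS E w (i+1) u = ((i+1:ℕ), (midS E w (i+1) u).2) := rfl
      rw [this]
      exact tag_glue _ hp (IH.1 u) hpl ((SP_length E w i).1 u)
    · intro v
      show TagOK ((SP E w i).2 v
          ++ midP E w (i+1) v :: pick (SP E w i).1 (NbrP E w (i+1) v) (J Vp i))
      have hp : TagOK (pick (SP E w i).1 (NbrP E w (i+1) v) (J Vp i)) := by
        unfold pick; split
        · exact IH.1 _
        · exact J_tag i
      have hpl : (pick (SP E w i).1 (NbrP E w (i+1) v) (J Vp i)).length = 2^i - 1 := by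
        unfold pick; split
        · exact (SP_length E w i).1 _
        · exact J_length i
      have : midP E w (i+1) v = ((i+1:ℕ), (midP E w (i+1) v).2) := rfl
      rw [this]
      exact tag_glue _ (IH.2 v) hp ((SP_length E w i).2 v) hpl

lemma Pid_congr {i : ℕ} {v v' : Vp} (h : NbrP E w i v = NbrP E w i v') :
    Pid E w i v = Pid E w i v' := by
  unfold Pid; rw [h]

lemma midP_congr {i : ℕ} {v v' : Vp} (h : NbrP E w i v = NbrP E w i v') :
    midP E w i v = midP E w i v' := by
  unfold midP; rw [Pid_congr E w h, h]

lemma midS_congr {i : ℕ} {u u' : Vs} (h : NbrS E w i u = NbrS E w i u') :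
    midS E w i u = midS E w i u' := by
  unfold midS; rw [h]

lemma P_congr : ∀ (m : ℕ) (v v' : Vp),
    (∀ j, 1 ≤ j → j ≤ m → NbrP E w j v = NbrP E w j v') →
    (SP E w m).2 v = (SP E w m).2 v'
  | 0, v, v', _ => rfl
  | (m+1), v, v', h => by
    show (SP E w m).2 v ++ midP E w (m+1) v :: pick (SP E w m).1 (NbrP E w (m+1) v) (J Vp m)
       = (SP E w m).2 v' ++ midP E w (m+1) v' :: pick (SP E w m).1 (NbrP E w (m+1) v') (J Vp m)
    rw [midP_congr E w (h (m+1) (by omega) le_rfl), h (m+1) (by omega) le_rfl,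
      P_congr m v v' (fun j h1 h2 => h j h1 (by omega))]

lemma S_congr : ∀ (m : ℕ) (u u' : Vs),
    (∀ j, 1 ≤ j → j ≤ m → NbrS E w j u = NbrS E w j u') →
    (SP E w m).1 u = (SP E w m).1 u'
  | 0, u, u', _ => rfl
  | (m+1), u, u', h => by
    show pick (SP E w m).2 (NbrS E w (m+1) u) (J Vp m) ++ midS E w (m+1) u :: (SP E w m).1 u
       = pick (SP E w m).2 (NbrS E w (m+1) u') (J Vp m) ++ midS E w (m+1) u' :: (SP E w m).1 u'
    rw [midS_congr E w (h (m+1) (by omega) le_rfl), h (m+1) (by omega) le_rfl,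
      S_congr m u u' (fun j h1 h2 => h j h1 (by omega))]

lemma twinP {i : ℕ} {u : Vs} {v v' : Vp} (hB : BicliqueUnion (SubAt E w i))
    (h1 : SubAt E w i u v) (h2 : SubAt E w i u v') : NbrP E w i v = NbrP E w i v' := by
  ext s
  exact ⟨fun hs => hB s u v v' hs h1 h2, fun hs => hB s u v' v hs h2 h1⟩

lemma twinS {i : ℕ} {u u' : Vs} {v : Vp} (hB : BicliqueUnion (SubAt E w i))
    (h1 : SubAt E w i u v) (h2 : SubAt E w i u' v) : NbrS E w i u = NbrS E w i u' := by
  ext p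
  exact ⟨fun hp => hB u' u v p h2 h1 hp, fun hp => hB u u' v p h1 h2 hp⟩

lemma allLevelsP (hH : SatisfiesHUBRule E w) {i : ℕ} (hi : 1 ≤ i) {u : Vs} {v v' : Vp}
    (h1 : SubAt E w i u v) (h2 : SubAt E w i u v') :
    ∀ j, 1 ≤ j → j ≤ i - 1 → NbrP E w j v = NbrP E w j v' := by
  intro j hj1 hj2
  by_cases hvv : v = v'
  · rw [hvv]
  rcases Nat.lt_or_ge i 2 with hlt | hge
  · omega
  · have hB := hH.1 i hi
    have htw : ∀ s, SubAt E w i s v ↔ SubAt E w i s v' := by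
      intro s
      have := twinP E w hB h1 h2
      rw [Set.ext_iff] at this
      exact this s
    have := hH.2.2 i hge v v' hvv ⟨u, h1⟩ htw j hj1 hj2
    ext s
    exact this s

lemma allLevelsS (hH : SatisfiesHUBRule E w) {i : ℕ} (hi : 1 ≤ i) {u u' : Vs} {v : Vp}
    (h1 : SubAt E w i u v) (h2 : SubAt E w i u' v) :
    ∀ j, 1 ≤ j → j ≤ i - 1 → NbrS E w j u = NbrS E w j u' := by
  intro j hj1 hj2
  by_cases huu : u = u'
  · rw [huu]
  rcases Nat.lt_or_ge i 2 with hlt | hge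
  · omega
  · have hB := hH.1 i hi
    have htw : ∀ p, SubAt E w i u p ↔ SubAt E w i u' p := by
      intro p
      have := twinS E w hB h1 h2
      rw [Set.ext_iff] at this
      exact this p
    have := hH.2.1 i hge u u' huu ⟨v, h1⟩ htw j hj1 hj2
    ext p
    exact this p


lemma midS_eq_midP {i : ℕ} {u : Vs} {v : Vp} (hB : BicliqueUnion (SubAt E w i))
    (huv : SubAt E w i u v) : midS E w i u = midP E w i v := by
  unfold midS midP
  have hset : NbrS E w i u = Pid E w i v := by
    ext p
    constructor
    · intro hp
      exact ⟨u, huv, hp⟩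
    · rintro ⟨s, hsv, hsp⟩
      exact hB u s v p huv hsv hsp
  split_ifs with h1 h2 h2
  · rw [hset]
  · exact absurd ⟨u, huv⟩ h2
  · exact absurd ⟨v, huv⟩ h1
  · exact absurd ⟨v, huv⟩ h1

lemma fwd (hH : SatisfiesHUBRule E w) {i : ℕ} (hi : 1 ≤ i) {u : Vs} {v : Vp}
    (huv : SubAt E w i u v) : (SP E w i).1 u = (SP E w i).2 v := by
  obtain ⟨i0, rfl⟩ : ∃ i0, i = i0 + 1 := ⟨i - 1, by omega⟩
  have hB := hH.1 (i0+1) hi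
  show pick (SP E w i0).2 (NbrS E w (i0+1) u) (J Vp i0)
      ++ midS E w (i0+1) u :: (SP E w i0).1 u
    = (SP E w i0).2 v
      ++ midP E w (i0+1) v :: pick (SP E w i0).1 (NbrP E w (i0+1) v) (J Vp i0)
  have hA : pick (SP E w i0).2 (NbrS E w (i0+1) u) (J Vp i0) = (SP E w i0).2 v := by
    have hne : (NbrS E w (i0+1) u).Nonempty := ⟨v, huv⟩
    unfold pick
    rw [dif_pos hne]
    exact P_congr E w i0 _ _ (allLevelsP E w hH hi hne.some_mem huv)
  have hC : (SP E w i0).1 u = pick (SP E w i0).1 (NbrP E w (i0+1) v) (J Vp i0) := by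
    have hne : (NbrP E w (i0+1) v).Nonempty := ⟨u, huv⟩
    unfold pick
    rw [dif_pos hne]
    exact (S_congr E w i0 _ _ (allLevelsS E w hH hi hne.some_mem huv)).symm
  rw [hA, midS_eq_midP E w hB huv, hC]

lemma mid_rev {i : ℕ} {u : Vs} {v : Vp} (h : midS E w i u = midP E w i v) :
    SubAt E w i u v := by
  unfold midS midP at h
  have h2 := congrArg Prod.snd h
  simp only at h2
  split_ifs at h2 with hs hp
  case pos =>
    have hset : NbrS E w i u = Pid E w i v := by
      injection h2
    obtain ⟨s, hs'⟩ := hp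
    have : v ∈ Pid E w i v := ⟨s, hs', hs'⟩
    rw [← hset] at this
    exact this
  all_goals simp at h2

lemma drop_eq_S {k i : ℕ} (hik : i ≤ k) (u : Vs) :
    ((SP E w k).1 u).drop ((2^k - 1) - (2^i - 1)) = (SP E w i).1 u := by
  obtain ⟨t, ht⟩ := S_suffix E w u hik
  have hlt : t.length = (2^k - 1) - (2^i - 1) := by
    have := congrArg List.length ht
    rw [List.length_append, (SP_length E w i).1 u, (SP_length E w k).1 u] at this
    omega
  rw [← ht]
  exact List.drop_left' hlt

lemma take_eq_P {k i : ℕ} (hik : i ≤ k) (v : Vp) :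
    ((SP E w k).2 v).take (2^i - 1) = (SP E w i).2 v := by
  obtain ⟨t, ht⟩ := P_prefix E w v hik
  rw [← ht]
  exact List.take_left' ((SP_length E w i).2 v)

lemma S_mid_get (i0 : ℕ) (u : Vs) (h : 2^i0 - 1 < ((SP E w (i0+1)).1 u).length) :
    ((SP E w (i0+1)).1 u)[2^i0 - 1]'h = midS E w (i0+1) u := by
  have e : (SP E w (i0+1)).1 u = pick (SP E w i0).2 (NbrS E w (i0+1) u) (J Vp i0)
      ++ midS E w (i0+1) u :: (SP E w i0).1 u := rfl
  have hpl : (pick (SP E w i0).2 (NbrS E w (i0+1) u) (J Vp i0)).length = 2^i0 - 1 := by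
    unfold pick; split
    · exact (SP_length E w i0).2 _
    · exact J_length i0
  rw [List.getElem_of_eq e, List.getElem_append_right (by omega)]
  have e2 : 2^i0 - 1 - (pick (SP E w i0).2 (NbrS E w (i0+1) u) (J Vp i0)).length = 0 := by
    omega
  simp [e2]

lemma P_mid_get (i0 : ℕ) (v : Vp) (h : 2^i0 - 1 < ((SP E w (i0+1)).2 v).length) :
    ((SP E w (i0+1)).2 v)[2^i0 - 1]'h = midP E w (i0+1) v := by
  have e : (SP E w (i0+1)).2 v = (SP E w i0).2 v
      ++ midP E w (i0+1) v :: pick (SP E w i0).1 (NbrP E w (i0+1) v) (J Vp i0) := rfl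
  have hpl : ((SP E w i0).2 v).length = 2^i0 - 1 := (SP_length E w i0).2 v
  rw [List.getElem_of_eq e, List.getElem_append_right (by omega)]
  have e2 : 2^i0 - 1 - ((SP E w i0).2 v).length = 0 := by omega
  simp [e2]

lemma main_fwd {k : ℕ} (hw : IsDecomposition E k w) (hH : SatisfiesHUBRule E w)
    {u : Vs} {v : Vp} (huv : E u v) :
    OverlapsBy ((SP E w k).1 u) ((SP E w k).2 v) (2^(w u v) - 1) := by
  obtain ⟨hi1, hik⟩ := hw u v huv
  set i := w u v with hidef
  have hpi : (2:ℕ)^1 ≤ 2^i := Nat.pow_le_pow_right (by norm_num) hi1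
  have hpk : (2:ℕ)^i ≤ 2^k := Nat.pow_le_pow_right (by norm_num) hik
  have heq := fwd E w hH hi1 ⟨huv, rfl⟩
  refine ⟨by norm_num at hpi ⊢; omega, ?_, ?_⟩
  · rw [(SP_length E w k).1 u, (SP_length E w k).2 v, min_self]
    omega
  · rw [(SP_length E w k).1 u, drop_eq_S E w hik, take_eq_P E w hik]
    exact heq

set_option maxHeartbeats 2000000 in
lemma main_rev {k : ℕ} (hH : SatisfiesHUBRule E w) {u : Vs} {v : Vp} {j : ℕ}
    (h : OverlapsBy ((SP E w k).1 u) ((SP E w k).2 v) j) : E u v := by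
  obtain ⟨hj1, hj2, hd⟩ := h
  rw [(SP_length E w k).1 u, (SP_length E w k).2 v, min_self] at hj2
  rw [(SP_length E w k).1 u] at hd
  have hk1 : (1:ℕ) ≤ 2^k := Nat.one_le_two_pow
  set m := (2^k - 1) - j with hm
  have hmj : m + j = 2^k - 1 := by omega
  have htags : ∀ r, 1 ≤ r → r ≤ j → ord2 (m + r) = ord2 r := by
    intro r hr1 hr2
    have hpd : r - 1 < (((SP E w k).1 u).drop m).length := by
      rw [List.length_drop, (SP_length E w k).1 u]; omega
    have hpt : r - 1 < (((SP E w k).2 v).take j).length := by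
      rw [List.length_take, (SP_length E w k).2 v]; omega
    have hel := List.getElem_of_eq hd (i := r - 1) hpd
    have e1 : (((SP E w k).1 u).drop m)[r-1]'hpd
        = ((SP E w k).1 u)[m + (r-1)]'(by rw [(SP_length E w k).1 u]; omega) :=
      List.getElem_drop ..
    have e2 : (((SP E w k).2 v).take j)[r-1]'hpt
        = ((SP E w k).2 v)[r-1]'(by rw [(SP_length E w k).2 v]; omega) :=
      List.getElem_take ..
    rw [e1, e2] at hel
    have t1 := (SP_tag E w k).1 u (m + (r-1))
      (by rw [(SP_length E w k).1 u]; omega)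
    have t2 := (SP_tag E w k).2 v (r-1) (by rw [(SP_length E w k).2 v]; omega)
    have e4 : r - 1 + 1 = r := by omega
    rw [e4] at t2
    rw [hel] at t1
    rw [t2] at t1
    have e3 : m + (r-1) + 1 = m + r := by omega
    rw [e3] at t1
    omega
  obtain ⟨i, hi1, hik, hj⟩ := overlap_len k j m hj1 hmj htags
  subst hj
  have hm2 : m = (2^k - 1) - (2^i - 1) := by omega
  rw [hm2] at hd
  have hSP : (SP E w i).1 u = (SP E w i).2 v := by
    rw [← drop_eq_S E w hik u, ← take_eq_P E w hik v]
    exact hd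
  obtain ⟨i0, rfl⟩ : ∃ i0, i = i0 + 1 := ⟨i - 1, by omega⟩
  have hp0 : (1:ℕ) ≤ 2^i0 := Nat.one_le_two_pow
  have hlu : 2^i0 - 1 < ((SP E w (i0+1)).1 u).length := by
    rw [(SP_length E w (i0+1)).1 u, pow_succ]; omega
  have hlv : 2^i0 - 1 < ((SP E w (i0+1)).2 v).length := by
    rw [(SP_length E w (i0+1)).2 v, pow_succ]; omega
  have hmid : midS E w (i0+1) u = midP E w (i0+1) v := by
    rw [← S_mid_get E w i0 u hlu, ← P_mid_get E w i0 v hlv]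
    exact List.getElem_of_eq hSP _
  exact (mid_rev E w hmid).1

lemma overlapsBy_map {α β : Type*} {f : α → β} (hf : Function.Injective f)
    (x y : List α) (i : ℕ) : OverlapsBy (x.map f) (y.map f) i ↔ OverlapsBy x y i := by
  unfold OverlapsBy
  rw [List.length_map, List.length_map, ← List.map_drop, ← List.map_take,
    (List.map_injective_iff.mpr hf).eq_iff]

lemma construction_works {k : ℕ} (hw : IsDecomposition E k w) (hH : SatisfiesHUBRule E w)
    [Countable (Sym Vp)] :
    ∃ (ls : Vs → List ℕ) (lp : Vp → List ℕ), IsOverlapLabeling E (2 ^ k - 1) ls lp := by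
  obtain ⟨f, hf⟩ := exists_injective_nat (Sym Vp)
  refine ⟨fun u => ((SP E w k).1 u).map f, fun v => ((SP E w k).2 v).map f, ?_, ?_, ?_⟩
  · intro u; rw [List.length_map]; exact (SP_length E w k).1 u
  · intro v; rw [List.length_map]; exact (SP_length E w k).2 v
  · intro u v
    constructor
    · intro huv
      exact ⟨2^(w u v) - 1, (overlapsBy_map hf _ _ _).mpr (main_fwd E w hw hH huv)⟩
    · rintro ⟨i, hi⟩
      exact main_rev E w hH ((overlapsBy_map hf _ _ _).mp hi)


end Construction

/-- If `w : E → {1,…,k}` is a decomposition of a bipartite graph `G` satisfying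
the HUB-rule, then `G` has an overlap labeling of length `2^k − 1`; in particular
`r(G) ≤ 2^k − 1`. -/
theorem statement10 {Vs Vp : Type*} [Fintype Vs] [Fintype Vp] (E : Vs → Vp → Prop)
    (k : ℕ) (w : Vs → Vp → ℕ) (hw : IsDecomposition E k w) (hH : SatisfiesHUBRule E w) :
    (∃ (ls : Vs → List ℕ) (lp : Vp → List ℕ), IsOverlapLabeling E (2 ^ k - 1) ls lp) ∧
      bReadability E ≤ 2 ^ k - 1 := by
  have h := construction_works E w hw hH
  exact ⟨h, Nat.sInf_le h⟩

end Readability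
end
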